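/- arXiv:0906.4255 — 4 statements merged into one kernel-verified Lean document; each statement's English description precedes it below -/
import Mathlib

section
/- Let (E_t, β_{s,t}) and (F_t, γ_{s,t}) be subproduct systems of two-dimensional Hilbert spaces, let (x_t,y_t)_t be a basis of (E_t,β) and (u_t,v_t)_t a basis of (F_t,γ). If there exists an isomorphism between (E_t,β) and (F_t,γ), then the two bases are of the same type with the same parameter: i.e., if one is of type E_1(a) and the other of type E_1(b) then a=b; if one is of type E_2(a) and the other of type E_2(b) then a=b; if one is of type E_3(λ) and the other of type E_3(μ) then λ=μ; and it is impossible for the two bases to be of two distinct types among E_1, E_2, E_3, E_4, E_5. -/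
noncomputable section

open scoped TensorProduct ComplexConjugate

namespace SubprodHilbert

section TensorConstruction


variable {E F : Type*} [NormedAddCommGroup E] [InnerProductSpace ℂ E]
  [NormedAddCommGroup F] [InnerProductSpace ℂ F]

local notation "⟪" x ", " y "⟫" => @inner ℂ _ _ x y

/-- For fixed `u, v`, the ℂ-bilinear functional `(u', v') ↦ ⟪u,u'⟫ ⟪v,v'⟫`. -/
def innerAux (u : E) (v : F) : E →ₗ[ℂ] F →ₗ[ℂ] ℂ :=
  LinearMap.mk₂ ℂ (fun u' v' => ⟪u, u'⟫ * ⟪v, v'⟫)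
    (fun m₁ m₂ n => by simp [inner_add_right]; ring)
    (fun c m n => by simp [inner_smul_right]; ring)
    (fun m n₁ n₂ => by simp [inner_add_right]; ring)
    (fun c m n => by simp [inner_smul_right]; ring)

@[simp] lemma innerAux_apply (u u' : E) (v v' : F) :
    innerAux u v u' v' = ⟪u, u'⟫ * ⟪v, v'⟫ := rfl

/-- The (conjugate-linear-in-the-first-variable) map sending `z : E ⊗ F` to the linear
functional `w ↦ ⟪z, w⟫`. -/
def innerFunc : E ⊗[ℂ] F →+ (E ⊗[ℂ] F →ₗ[ℂ] ℂ) :=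
  TensorProduct.liftAddHom
    (AddMonoidHom.mk'
      (fun u => AddMonoidHom.mk' (fun v => TensorProduct.lift (innerAux u v))
        (fun v₁ v₂ => by
          apply TensorProduct.ext'
          intro u' v'
          simp [inner_add_left]
          ring))
      (fun u₁ u₂ => by
        ext v : 1
        apply TensorProduct.ext'
        intro u' v'
        simp [inner_add_left]
        ring))
    (fun c u v => by
      apply TensorProduct.ext'
      intro u' v'
      simp [inner_smul_left]
      ring)

@[simp] lemma innerFunc_tmul (u u' : E) (v v' : F) :
    innerFunc (u ⊗ₜ[ℂ] v) (u' ⊗ₜ[ℂ] v') = ⟪u, u'⟫ * ⟪v, v'⟫ := rfl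

lemma innerFunc_smul (c : ℂ) (z : E ⊗[ℂ] F) :
    innerFunc (c • z) = conj c • innerFunc z := by
  induction z using TensorProduct.induction_on with
  | zero => simp
  | tmul u v =>
      rw [TensorProduct.smul_tmul']
      apply TensorProduct.ext'
      intro u' v'
      simp [inner_smul_left]
      ring
  | add z₁ z₂ h₁ h₂ => rw [smul_add, map_add, map_add, h₁, h₂, smul_add]

lemma innerFunc_conj_symm (z w : E ⊗[ℂ] F) :
    conj (innerFunc w z) = innerFunc z w := by
  induction z using TensorProduct.induction_on with
  | zero => simp
  | tmul u v =>
      induction w using TensorProduct.induction_on with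
      | zero => simp
      | tmul u' v' =>
          simp only [innerFunc_tmul, map_mul, inner_conj_symm]
      | add w₁ w₂ h₁ h₂ => simp [map_add, h₁, h₂]
  | add z₁ z₂ h₁ h₂ => simp [map_add, h₁, h₂]

lemma exists_orthonormal_rep (z : E ⊗[ℂ] F) :
    ∃ (n : ℕ) (e : Fin n → E) (w : Fin n → F),
      Orthonormal ℂ e ∧ z = ∑ i, e i ⊗ₜ[ℂ] w i := by
  obtain ⟨S, rfl⟩ := TensorProduct.exists_finset z
  set U : Submodule ℂ E := Submodule.span ℂ (Prod.fst '' (S : Set (E × F))) with hU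
  haveI : FiniteDimensional ℂ U :=
    FiniteDimensional.span_of_finite ℂ (S.finite_toSet.image _)
  let b : OrthonormalBasis (Fin (Module.finrank ℂ U)) ℂ U := stdOrthonormalBasis ℂ U
  have hone : Orthonormal ℂ (fun i => (b i : E)) := by
    have hb := b.orthonormal
    constructor
    · intro i; simpa [norm] using hb.1 i
    · intro i j hij; simpa [Submodule.coe_inner] using hb.2 hij
  refine ⟨_, fun i => (b i : E), fun i => ∑ p ∈ S, ⟪(b i : E), p.1⟫ • p.2, hone, ?_⟩
  have key : ∀ p ∈ S, p.1 ⊗ₜ[ℂ] p.2 = ∑ i, ⟪(b i : E), p.1⟫ • ((b i : E) ⊗ₜ[ℂ] p.2) := by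
    intro p hp
    have hmem : p.1 ∈ U := Submodule.subset_span ⟨p, hp, rfl⟩
    have hrep : ((∑ i, (⟪b i, (⟨p.1, hmem⟩ : U)⟫ : ℂ) • b i : U) : E) = p.1 := by
      rw [b.sum_repr' ⟨p.1, hmem⟩]
    have h2 : ∀ i, (⟪b i, (⟨p.1, hmem⟩ : U)⟫ : ℂ) = ⟪(b i : E), p.1⟫ := fun i =>
      Submodule.coe_inner U (b i) ⟨p.1, hmem⟩
    have hrep' : p.1 = ∑ i, ⟪(b i : E), p.1⟫ • (b i : E) := by
      calc p.1 = ((∑ i, (⟪b i, (⟨p.1, hmem⟩ : U)⟫ : ℂ) • b i : U) : E) := hrep.symm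
        _ = ∑ i, (⟪b i, (⟨p.1, hmem⟩ : U)⟫ : ℂ) • (b i : E) := by push_cast; rfl
        _ = ∑ i, ⟪(b i : E), p.1⟫ • (b i : E) := Finset.sum_congr rfl fun i _ => by rw [h2]
    calc p.1 ⊗ₜ[ℂ] p.2 = (∑ i, ⟪(b i : E), p.1⟫ • (b i : E)) ⊗ₜ[ℂ] p.2 := by rw [← hrep']
      _ = ∑ i, ⟪(b i : E), p.1⟫ • ((b i : E) ⊗ₜ[ℂ] p.2) := by
          rw [TensorProduct.sum_tmul]
          refine Finset.sum_congr rfl fun i _ => ?_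
          rw [TensorProduct.smul_tmul']
  calc ∑ p ∈ S, p.1 ⊗ₜ[ℂ] p.2
      = ∑ p ∈ S, ∑ i, ⟪(b i : E), p.1⟫ • ((b i : E) ⊗ₜ[ℂ] p.2) :=
        Finset.sum_congr rfl key
    _ = ∑ i, ∑ p ∈ S, ⟪(b i : E), p.1⟫ • ((b i : E) ⊗ₜ[ℂ] p.2) := Finset.sum_comm
    _ = ∑ i, (b i : E) ⊗ₜ[ℂ] (∑ p ∈ S, ⟪(b i : E), p.1⟫ • p.2) := by
        refine Finset.sum_congr rfl fun i _ => ?_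
        rw [TensorProduct.tmul_sum]
        refine Finset.sum_congr rfl fun p _ => ?_
        rw [TensorProduct.tmul_smul]

lemma innerFunc_self (n : ℕ) (e : Fin n → E) (w : Fin n → F) (he : Orthonormal ℂ e) :
    innerFunc (∑ i, e i ⊗ₜ[ℂ] w i) (∑ i, e i ⊗ₜ[ℂ] w i) = ∑ i, ⟪w i, w i⟫ := by
  have hee : ∀ i j, (⟪e i, e j⟫ : ℂ) = if i = j then 1 else 0 := orthonormal_iff_ite.mp he
  simp only [map_sum, LinearMap.coe_sum, Finset.sum_apply, innerFunc_tmul, hee, ite_mul,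
    one_mul, zero_mul]
  rw [Finset.sum_comm]
  simp

/-- The inner-product-space core on the algebraic tensor product of two complex
inner product spaces, determined by `⟪u ⊗ v, u' ⊗ v'⟫ = ⟪u,u'⟫ ⟪v,v'⟫`. -/
def tensorCore : InnerProductSpace.Core ℂ (E ⊗[ℂ] F) where
  inner z w := innerFunc z w
  conj_inner_symm := innerFunc_conj_symm
  re_inner_nonneg z := by
    show 0 ≤ RCLike.re (innerFunc z z)
    obtain ⟨n, e, w, he, rfl⟩ := exists_orthonormal_rep z
    rw [innerFunc_self n e w he]
    rw [map_sum]
    exact Finset.sum_nonneg fun i _ => inner_self_nonneg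
  add_left z₁ z₂ w := by
    show innerFunc (z₁ + z₂) w = innerFunc z₁ w + innerFunc z₂ w
    rw [map_add]; rfl
  smul_left z w c := by
    show innerFunc (c • z) w = conj c * innerFunc z w
    rw [innerFunc_smul]; rfl
  definite z hz := by
    replace hz : innerFunc z z = 0 := hz
    obtain ⟨n, e, w, he, rfl⟩ := exists_orthonormal_rep z
    rw [innerFunc_self n e w he] at hz
    have hz' : ∑ i, (‖w i‖ ^ 2 : ℝ) = 0 := by
      have := congrArg Complex.re hz
      simpa [← @inner_self_eq_norm_sq ℂ] using this
    have hw : ∀ i ∈ Finset.univ, w i = 0 := by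
      intro i hi
      have h0 : (‖w i‖ ^ 2 : ℝ) = 0 :=
        (Finset.sum_eq_zero_iff_of_nonneg fun j _ => sq_nonneg _).mp hz' i hi
      simpa using h0
    calc ∑ i, e i ⊗ₜ[ℂ] w i = ∑ i : Fin n, (0 : E ⊗[ℂ] F) :=
          Finset.sum_congr rfl fun i hi => by rw [hw i hi, TensorProduct.tmul_zero]
      _ = 0 := Finset.sum_const_zero

instance tensorNormedAddCommGroup : NormedAddCommGroup (E ⊗[ℂ] F) :=
  @InnerProductSpace.Core.toNormedAddCommGroup ℂ _ _ _ _ tensorCore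

instance tensorInnerProductSpace : InnerProductSpace ℂ (E ⊗[ℂ] F) :=
  InnerProductSpace.ofCore tensorCore.toCore

@[simp] lemma inner_tmul (u u' : E) (v v' : F) :
    (inner ℂ (u ⊗ₜ[ℂ] v) (u' ⊗ₜ[ℂ] v') : ℂ) = ⟪u, u'⟫ * ⟪v, v'⟫ := rfl
end TensorConstruction


/-- Cast between the fibers of a family of inner product spaces along an equality of
indices, as a linear isometric isomorphism. -/
def castE {ι : Type*} (E : ι → Type*) [∀ t, NormedAddCommGroup (E t)]
    [∀ t, InnerProductSpace ℂ (E t)] {a b : ι} (h : a = b) : E a ≃ₗᵢ[ℂ] E b := by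
  subst h; exact LinearIsometryEquiv.refl ℂ (E a)


section Discrete

variable (E F : ℕ+ → Type*)
  [∀ t, NormedAddCommGroup (E t)] [∀ t, InnerProductSpace ℂ (E t)]
  [∀ t, NormedAddCommGroup (F t)] [∀ t, InnerProductSpace ℂ (F t)]
variable (β : ∀ s t : ℕ+, E (s + t) →ₗᵢ[ℂ] (E s ⊗[ℂ] E t))
variable (γ : ∀ s t : ℕ+, F (s + t) →ₗᵢ[ℂ] (F s ⊗[ℂ] F t))

/-- The associativity condition in the definition of a subproduct system. -/
def SubprodAssoc : Prop :=
  ∀ r s t : ℕ+, ∀ u : E (r + s + t),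
    (TensorProduct.assoc ℂ (E r) (E s) (E t))
      (TensorProduct.map (β r s).toLinearMap LinearMap.id (β (r + s) t u))
    = TensorProduct.map LinearMap.id (β s t).toLinearMap
        (β r (s + t) (castE E (add_assoc r s t) u))

/-- `(x, y)` is a basis of type `𝓔₁(a)` of the subproduct system `(E, β)`. -/
def IsBasisE1 (a : ℝ) (x y : ∀ t : ℕ+, E t) : Prop :=
  (∀ t, ‖x t‖ = 1) ∧ (∀ t, ‖y t‖ = 1) ∧
  (∀ t : ℕ+, (inner ℂ (x t) (y t) : ℂ) = (a : ℂ) ^ (t : ℕ)) ∧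
  (∀ s t : ℕ+, β s t (x (s + t)) = x s ⊗ₜ[ℂ] x t) ∧
  (∀ s t : ℕ+, β s t (y (s + t)) = y s ⊗ₜ[ℂ] y t)

/-- `(x, y)` is a basis of type `𝓔₂(a)` of the subproduct system `(E, β)`. -/
def IsBasisE2 (a : ℝ) (x y : ∀ t : ℕ+, E t) : Prop :=
  (∀ t, ‖x t‖ = 1) ∧ (∀ t, ‖y t‖ = 1) ∧
  (∀ t : ℕ+, (inner ℂ (x t) (y t) : ℂ) = (a : ℂ) ^ (t : ℕ)) ∧
  (∀ s t : ℕ+, Even (s : ℕ) → β s t (x (s + t)) = x s ⊗ₜ[ℂ] x t) ∧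
  (∀ s t : ℕ+, ¬ Even (s : ℕ) → β s t (x (s + t)) = x s ⊗ₜ[ℂ] y t) ∧
  (∀ s t : ℕ+, Even (s : ℕ) → β s t (y (s + t)) = y s ⊗ₜ[ℂ] y t) ∧
  (∀ s t : ℕ+, ¬ Even (s : ℕ) → β s t (y (s + t)) = y s ⊗ₜ[ℂ] x t)

/-- `(x, y)` is a basis of type `𝓔₃(λ)` of the subproduct system `(E, β)`. -/
def IsBasisE3 (l : ℂ) (x y : ∀ t : ℕ+, E t) : Prop :=
  (∀ t, ‖x t‖ = 1) ∧
  (∀ t : ℕ+, ‖y t‖ ^ 2 = ∑ k ∈ Finset.range (t : ℕ), ‖l‖ ^ (2 * k)) ∧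
  (∀ t : ℕ+, (inner ℂ (x t) (y t) : ℂ) = 0) ∧
  (∀ s t : ℕ+, β s t (x (s + t)) = x s ⊗ₜ[ℂ] x t) ∧
  (∀ s t : ℕ+, β s t (y (s + t)) = y s ⊗ₜ[ℂ] x t + l ^ (s : ℕ) • (x s ⊗ₜ[ℂ] y t))

/-- `(x, y)` is a basis of type `𝓔₄` of the subproduct system `(E, β)`. -/
def IsBasisE4 (x y : ∀ t : ℕ+, E t) : Prop :=
  (∀ t, ‖x t‖ = 1) ∧ (∀ t, ‖y t‖ = 1) ∧
  (∀ t : ℕ+, (inner ℂ (x t) (y t) : ℂ) = 0) ∧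
  (∀ s t : ℕ+, β s t (x (s + t)) = x s ⊗ₜ[ℂ] x t) ∧
  (∀ s t : ℕ+, β s t (y (s + t)) = y s ⊗ₜ[ℂ] x t)

/-- `(x, y)` is a basis of type `𝓔₅` of the subproduct system `(E, β)`. -/
def IsBasisE5 (x y : ∀ t : ℕ+, E t) : Prop :=
  (∀ t, ‖x t‖ = 1) ∧ (∀ t, ‖y t‖ = 1) ∧
  (∀ t : ℕ+, (inner ℂ (x t) (y t) : ℂ) = 0) ∧
  (∀ s t : ℕ+, β s t (x (s + t)) = x s ⊗ₜ[ℂ] x t) ∧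
  (∀ s t : ℕ+, β s t (y (s + t)) = x s ⊗ₜ[ℂ] y t)

/-- The five types of bases, together with their parameters. -/
inductive BType : Type
  | e1 (a : ℝ) | e2 (a : ℝ) | e3 (l : ℂ) | e4 | e5

/-- `(x, y)` is a basis of the subproduct system `(E, β)` of the given type (this includes
the admissibility constraints `a ∈ [0,1)`, resp. `λ ≠ 0`, on the parameter). -/
def IsBasisOfType : BType → (∀ t : ℕ+, E t) → (∀ t : ℕ+, E t) → Prop
  | .e1 a => fun x y => 0 ≤ a ∧ a < 1 ∧ IsBasisE1 E β a x y
  | .e2 a => fun x y => 0 ≤ a ∧ a < 1 ∧ IsBasisE2 E β a x y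
  | .e3 l => fun x y => l ≠ 0 ∧ IsBasisE3 E β l x y
  | .e4 => fun x y => IsBasisE4 E β x y
  | .e5 => fun x y => IsBasisE5 E β x y

/-- The family `θ` of unitaries intertwines the subproduct systems `(E, β)` and `(F, γ)`,
i.e. it is an isomorphism of subproduct systems. -/
def Intertwines (θ : ∀ t : ℕ+, E t ≃ₗᵢ[ℂ] F t) : Prop :=
  ∀ s t : ℕ+, ∀ w : E (s + t),
    γ s t (θ (s + t) w) =
      TensorProduct.map (θ s).toLinearEquiv.toLinearMap (θ t).toLinearEquiv.toLinearMap
        (β s t w)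

/-- The structure maps of the subproduct system `(E_{mt})_t` obtained by restricting
`(E, β)` to the multiples of `m`. -/
def restrictβ (m : ℕ+) :
    ∀ s t : ℕ+, E (m * (s + t)) →ₗᵢ[ℂ] (E (m * s) ⊗[ℂ] E (m * t)) := fun s t =>
  (β (m * s) (m * t)).comp (castE E (by rw [mul_add])).toLinearIsometry

end Discrete

section Aux

attribute [-instance] TensorProduct.instInner

@[simp] lemma inner_tmul' {E F : Type*} [NormedAddCommGroup E] [InnerProductSpace ℂ E]
    [NormedAddCommGroup F] [InnerProductSpace ℂ F] (u u' : E) (v v' : F) :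
    (inner ℂ (u ⊗ₜ[ℂ] v) (u' ⊗ₜ[ℂ] v') : ℂ) = inner ℂ u u' * inner ℂ v v' := rfl

variable {H : Type*} [NormedAddCommGroup H] [InnerProductSpace ℂ H]

local notation "⟪" x ", " y "⟫" => @inner ℂ _ _ x y

lemma indep_pair_of_gram {u v : H} (h : ⟪u, u⟫ * ⟪v, v⟫ - ⟪u, v⟫ * ⟪v, u⟫ ≠ 0) :
    LinearIndependent ℂ ![u, v] := by
  rw [LinearIndependent.pair_iff]
  intro s t hst
  have h1 : s * ⟪u, u⟫ + t * ⟪u, v⟫ = 0 := by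
    have := congrArg (fun z => (⟪u, z⟫ : ℂ)) hst
    simpa [inner_add_right, inner_smul_right] using this
  have h2 : s * ⟪v, u⟫ + t * ⟪v, v⟫ = 0 := by
    have := congrArg (fun z => (⟪v, z⟫ : ℂ)) hst
    simpa [inner_add_right, inner_smul_right] using this
  constructor
  · have hs : s * (⟪u, u⟫ * ⟪v, v⟫ - ⟪u, v⟫ * ⟪v, u⟫) = 0 := by
      linear_combination ⟪v, v⟫ * h1 - ⟪u, v⟫ * h2
    rcases mul_eq_zero.mp hs with h' | h'
    · exact h'
    · exact absurd h' h
  · have ht : t * (⟪u, u⟫ * ⟪v, v⟫ - ⟪u, v⟫ * ⟪v, u⟫) = 0 := by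
      linear_combination ⟪u, u⟫ * h2 - ⟪v, u⟫ * h1
    rcases mul_eq_zero.mp ht with h' | h'
    · exact h'
    · exact absurd h' h

lemma exists_coords (hdim : Module.finrank ℂ H = 2) {u v : H}
    (hind : LinearIndependent ℂ ![u, v]) (w : H) : ∃ s t : ℂ, w = s • u + t • v := by
  have hspan : Submodule.span ℂ (Set.range ![u, v]) = ⊤ :=
    hind.span_eq_top_of_card_eq_finrank (by simp [hdim])
  have hw : w ∈ Submodule.span ℂ ({u, v} : Set H) := by
    have : Set.range ![u, v] = ({u, v} : Set H) := by
      simp [Matrix.range_cons, Matrix.range_empty, Set.pair_comm]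
    rw [← this, hspan]; trivial
  obtain ⟨s, t, hst⟩ := Submodule.mem_span_pair.mp hw
  exact ⟨s, t, hst.symm⟩

lemma expand_onb (hdim : Module.finrank ℂ H = 2) {e f : H}
    (hee : ⟪e, e⟫ = 1) (hff : ⟪f, f⟫ = 1) (hef : ⟪e, f⟫ = 0) (w : H) :
    w = ⟪e, w⟫ • e + ⟪f, w⟫ • f := by
  have hfe : ⟪f, e⟫ = 0 := by
    rw [← inner_conj_symm, hef, map_zero]
  have hind : LinearIndependent ℂ ![e, f] :=
    indep_pair_of_gram (by rw [hee, hff, hef]; norm_num)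
  obtain ⟨s, t, rfl⟩ := exists_coords hdim hind w
  have hs : ⟪e, s • e + t • f⟫ = s := by
    simp only [inner_add_right, inner_smul_right, hee, hef]; ring
  have ht : ⟪f, s • e + t • f⟫ = t := by
    simp only [inner_add_right, inner_smul_right, hfe, hff]; ring
  rw [hs, ht]

/-- The det-nonzero condition for coefficients of two independent vectors. -/
lemma det_ne_zero_of_indep {u v w₁ w₂ : H} {α β α' β' : ℂ}
    (h1 : w₁ = α • u + β • v) (h2 : w₂ = α' • u + β' • v)
    (hind : LinearIndependent ℂ ![w₁, w₂]) : α * β' - α' * β ≠ 0 := by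
  intro hdet
  have key : ∀ s t : ℂ, s • w₁ + t • w₂ = 0 → s = 0 ∧ t = 0 :=
    LinearIndependent.pair_iff.mp hind
  have e1 : β' • w₁ + (-β) • w₂ = 0 := by
    rw [h1, h2, smul_add, smul_add, smul_smul, smul_smul, smul_smul, smul_smul,
      add_add_add_comm, ← add_smul, ← add_smul,
      show β' * α + -β * α' = 0 by linear_combination hdet,
      show β' * β + -β * β' = 0 by ring]
    simp
  have e2 : (-α') • w₁ + α • w₂ = 0 := by
    rw [h1, h2, smul_add, smul_add, smul_smul, smul_smul, smul_smul, smul_smul,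
      add_add_add_comm, ← add_smul, ← add_smul,
      show -α' * α + α * α' = 0 by ring,
      show -α' * β + α * β' = 0 by linear_combination hdet]
    simp
  obtain ⟨hb', hb⟩ := key _ _ e1
  obtain ⟨ha', ha⟩ := key _ _ e2
  have hα : α = 0 := ha
  have hβ : β = 0 := by simpa [neg_eq_zero] using hb
  have hw₁ : w₁ = 0 := by rw [h1, hα, hβ]; simp
  exact hind.ne_zero 0 (by simpa using hw₁)

/-- `√(1-a²)` as a complex number. -/
def cc (a : ℝ) : ℂ := (Real.sqrt (1 - a ^ 2) : ℂ)

@[simp] lemma conj_cc (a : ℝ) : conj (cc a) = cc a := Complex.conj_ofReal _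

lemma cc_mul_self {a : ℝ} (h0 : 0 ≤ a) (h1 : a < 1) : cc a * cc a = 1 - (a : ℂ) * a := by
  rw [cc, ← Complex.ofReal_mul, Real.mul_self_sqrt (by nlinarith)]
  push_cast; ring

lemma cc_ne_zero {a : ℝ} (h0 : 0 ≤ a) (h1 : a < 1) : cc a ≠ 0 := by
  rw [cc, ne_eq, Complex.ofReal_eq_zero]
  have : 0 < Real.sqrt (1 - a ^ 2) := Real.sqrt_pos.mpr (by nlinarith)
  exact ne_of_gt this

/-- Auxiliary vector: `a • e + sqrt (1-a²) • f`. -/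
def wvec (a : ℝ) (e f : H) : H :=
  (a : ℂ) • e + cc a • f

/-- The images under the structure maps of the basis vectors at time 2, expressed through
an orthonormal pair, for each type. -/
def gpair : BType → H → H → (H ⊗[ℂ] H) × (H ⊗[ℂ] H)
  | .e1 a, e, f => (e ⊗ₜ[ℂ] e, wvec a e f ⊗ₜ[ℂ] wvec a e f)
  | .e2 a, e, f => (e ⊗ₜ[ℂ] wvec a e f, wvec a e f ⊗ₜ[ℂ] e)
  | .e3 l, e, f => (e ⊗ₜ[ℂ] e, f ⊗ₜ[ℂ] e + l • (e ⊗ₜ[ℂ] f))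
  | .e4, e, f => (e ⊗ₜ[ℂ] e, f ⊗ₜ[ℂ] e)
  | .e5, e, f => (e ⊗ₜ[ℂ] e, e ⊗ₜ[ℂ] f)

/-- Admissibility constraints on the parameter of a type. -/
def Adm : BType → Prop
  | .e1 a => 0 ≤ a ∧ a < 1
  | .e2 a => 0 ≤ a ∧ a < 1
  | .e3 l => l ≠ 0
  | .e4 => True
  | .e5 => True

/-- First coordinate tuple of `gpair` relative to an orthonormal basis,
when the defining pair has coordinates `(P1, P2)` and `(R1, R2)`. -/
def tup1 : BType → ℂ → ℂ → ℂ → ℂ → ℂ × ℂ × ℂ × ℂ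
  | .e1 _, P1, P2, _, _ => (P1 * P1, P1 * P2, P2 * P1, P2 * P2)
  | .e2 a, P1, P2, R1, R2 =>
      (P1 * ((a : ℂ) * P1 + cc a * R1), P1 * ((a : ℂ) * P2 + cc a * R2),
       P2 * ((a : ℂ) * P1 + cc a * R1), P2 * ((a : ℂ) * P2 + cc a * R2))
  | .e3 _, P1, P2, _, _ => (P1 * P1, P1 * P2, P2 * P1, P2 * P2)
  | .e4, P1, P2, _, _ => (P1 * P1, P1 * P2, P2 * P1, P2 * P2)
  | .e5, P1, P2, _, _ => (P1 * P1, P1 * P2, P2 * P1, P2 * P2)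

/-- Second coordinate tuple of `gpair`. -/
def tup2 : BType → ℂ → ℂ → ℂ → ℂ → ℂ × ℂ × ℂ × ℂ
  | .e1 a, P1, P2, R1, R2 =>
      (((a : ℂ) * P1 + cc a * R1) * ((a : ℂ) * P1 + cc a * R1),
       ((a : ℂ) * P1 + cc a * R1) * ((a : ℂ) * P2 + cc a * R2),
       ((a : ℂ) * P2 + cc a * R2) * ((a : ℂ) * P1 + cc a * R1),
       ((a : ℂ) * P2 + cc a * R2) * ((a : ℂ) * P2 + cc a * R2))
  | .e2 a, P1, P2, R1, R2 =>
      (((a : ℂ) * P1 + cc a * R1) * P1, ((a : ℂ) * P1 + cc a * R1) * P2,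
       ((a : ℂ) * P2 + cc a * R2) * P1, ((a : ℂ) * P2 + cc a * R2) * P2)
  | .e3 l, P1, P2, R1, R2 =>
      (R1 * P1 + l * (P1 * R1), R1 * P2 + l * (P1 * R2),
       R2 * P1 + l * (P2 * R1), R2 * P2 + l * (P2 * R2))
  | .e4, P1, P2, R1, R2 => (R1 * P1, R1 * P2, R2 * P1, R2 * P2)
  | .e5, P1, P2, R1, R2 => (P1 * R1, P1 * R2, P2 * R1, P2 * R2)

variable {H : Type*} [NormedAddCommGroup H] [InnerProductSpace ℂ H]

/-- Components of an element of `H ⊗ H` relative to the tensor basis built from `e, f`. -/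
lemma inner_real_smul_right (x y : H) (r : ℝ) : (inner ℂ x (r • y) : ℂ) = (r : ℂ) * inner ℂ x y := by
  rw [← Complex.coe_smul, inner_smul_right]

/-- Components of an element of `H ⊗ H` relative to the tensor basis built from `e, f`. -/
def comps (e f : H) (z : H ⊗[ℂ] H) : ℂ × ℂ × ℂ × ℂ :=
  ((inner ℂ (e ⊗ₜ[ℂ] e) z : ℂ), (inner ℂ (e ⊗ₜ[ℂ] f) z : ℂ),
   (inner ℂ (f ⊗ₜ[ℂ] e) z : ℂ), (inner ℂ (f ⊗ₜ[ℂ] f) z : ℂ))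

lemma comps_add_smul (e f : H) (α β : ℂ) (z w : H ⊗[ℂ] H) :
    comps e f (α • z + β • w) = α • comps e f z + β • comps e f w := by
  simp [comps, inner_add_right, inner_smul_right, Prod.smul_mk, Prod.mk_add_mk]

lemma comps_gpair1 (e f p r : H)
    (hee : (inner ℂ e e : ℂ) = 1) (hff : (inner ℂ f f : ℂ) = 1)
    (hef : (inner ℂ e f : ℂ) = 0) (hfe : (inner ℂ f e : ℂ) = 0) (bt : BType) :
    comps e f (gpair bt p r).1
      = tup1 bt (inner ℂ e p) (inner ℂ f p) (inner ℂ e r) (inner ℂ f r) := by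
  cases bt <;>
    simp [comps, gpair, tup1, wvec, cc, TensorProduct.add_tmul, TensorProduct.tmul_add,
      TensorProduct.smul_tmul', TensorProduct.tmul_smul, inner_add_right, inner_smul_right,
      inner_real_smul_right, hee, hff, hef, hfe] <;>
    ring_nf <;> simp

lemma comps_gpair2 (e f p r : H)
    (hee : (inner ℂ e e : ℂ) = 1) (hff : (inner ℂ f f : ℂ) = 1)
    (hef : (inner ℂ e f : ℂ) = 0) (hfe : (inner ℂ f e : ℂ) = 0) (bt : BType) :
    comps e f (gpair bt p r).2
      = tup2 bt (inner ℂ e p) (inner ℂ f p) (inner ℂ e r) (inner ℂ f r) := by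
  cases bt <;>
    simp [comps, gpair, tup2, wvec, cc, TensorProduct.add_tmul, TensorProduct.tmul_add,
      TensorProduct.smul_tmul', TensorProduct.tmul_smul, inner_add_right, inner_smul_right,
      inner_real_smul_right, hee, hff, hef, hfe] <;>
    ring_nf <;> simp

lemma param_endgame' {a b : ℝ} (ha0 : 0 ≤ a) (ha1 : a < 1) (hb0 : 0 ≤ b) (hb1 : b < 1)
    (h : (a : ℂ) ^ 2 * (1 - (b : ℂ) ^ 2) = (1 - (a : ℂ) ^ 2) * (b : ℂ) ^ 2) :
    a = b := by
  have hr : a ^ 2 * (1 - b ^ 2) = (1 - a ^ 2) * b ^ 2 := by exact_mod_cast h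
  have h3 : a ^ 2 = b ^ 2 := by nlinarith
  nlinarith [sq_nonneg (a - b), sq_nonneg (a + b)]

lemma elim2 {x d : ℂ} (hd : d ≠ 0) (h : x * (d * d) = 0) : x = 0 := by
  rcases mul_eq_zero.mp h with h | h
  · exact h
  · exact absurd (mul_self_eq_zero.mp h) hd

lemma elim1 {x d : ℂ} (hd : d ≠ 0) (h : x * d = 0) : x = 0 :=
  (mul_eq_zero.mp h).resolve_right hd

lemma unit1 {X Y : ℂ} (n : conj X * X + conj Y * Y = 1) (h : Y = 0) : conj X * X = 1 := by
  subst h; simpa using n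

lemma unit1' {X Y : ℂ} (n : conj X * X + conj Y * Y = 1) (h : X = 0) : conj Y * Y = 1 := by
  subst h; simpa using n

lemma ne_zero_of_unit {X : ℂ} (h : conj X * X = 1) : X ≠ 0 := by
  intro h0; rw [h0] at h; simp at h

lemma mul_eq' {x y z w : ℂ} (h1 : x = y) (h2 : z = w) : x * z = y * w := by rw [h1, h2]

lemma param_endgame {a b : ℝ} (ha0 : 0 ≤ a) (ha1 : a < 1) (hb0 : 0 ≤ b) (hb1 : b < 1)
    (h : ((a : ℂ) ^ 2 * (1 - (b : ℂ) ^ 2)) ^ 2 = ((1 - (a : ℂ) ^ 2) * (b : ℂ) ^ 2) ^ 2) :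
    a = b := by
  have hr : (a ^ 2 * (1 - b ^ 2)) ^ 2 = ((1 - a ^ 2) * b ^ 2) ^ 2 := by exact_mod_cast h
  have hx : 0 ≤ a ^ 2 * (1 - b ^ 2) :=
    mul_nonneg (sq_nonneg a) (by nlinarith)
  have hy : 0 ≤ (1 - a ^ 2) * b ^ 2 :=
    mul_nonneg (by nlinarith) (sq_nonneg b)
  have hsplit : (a ^ 2 * (1 - b ^ 2) - (1 - a ^ 2) * b ^ 2) *
      (a ^ 2 * (1 - b ^ 2) + (1 - a ^ 2) * b ^ 2) = 0 := by nlinarith [hr]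
  have h2 : a ^ 2 * (1 - b ^ 2) = (1 - a ^ 2) * b ^ 2 := by
    rcases mul_eq_zero.mp hsplit with h' | h'
    · linarith
    · nlinarith
  have h3 : a ^ 2 = b ^ 2 := by nlinarith
  nlinarith [sq_nonneg (a - b), sq_nonneg (a + b)]

set_option maxHeartbeats 1000000 in
lemma key_tuples (bt bt' : BType) (hbt : Adm bt) (hbt' : Adm bt')
    (P1 P2 R1 R2 α β α' β' : ℂ)
    (n1 : conj P1 * P1 + conj P2 * P2 = 1)
    (n2 : conj R1 * R1 + conj R2 * R2 = 1)
    (o1 : conj P1 * R1 + conj P2 * R2 = 0)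
    (o2 : conj R1 * P1 + conj R2 * P2 = 0)
    (hdet : α * β' - α' * β ≠ 0)
    (h1 : tup1 bt P1 P2 R1 R2 = α • tup1 bt' 1 0 0 1 + β • tup2 bt' 1 0 0 1)
    (h2 : tup2 bt P1 P2 R1 R2 = α' • tup1 bt' 1 0 0 1 + β' • tup2 bt' 1 0 0 1) :
    bt = bt' := by
  have hU1 : conj P1 * (P1*R2 - P2*R1) = R2 := by linear_combination R2*n1 - P2*o1
  have hU2 : conj P2 * (P1*R2 - P2*R1) = -R1 := by linear_combination -R1*n1 + P1*o1
  have hU3 : conj R1 * (P1*R2 - P2*R1) = -P2 := by linear_combination -P2*n2 + R2*o2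
  have hU4 : conj R2 * (P1*R2 - P2*R1) = P1 := by linear_combination P1*n2 - R1*o2
  have hD : P1*R2 - P2*R1 ≠ 0 := by
    intro h
    rw [h, mul_zero] at hU1 hU2
    have hR2 : R2 = 0 := by linear_combination -hU1
    have hR1 : R1 = 0 := by linear_combination hU2
    rw [hR1, hR2] at n2; simp at n2
  cases bt with
  | e1 a =>
    obtain ⟨ha0, ha1⟩ := hbt
    have hc : cc a ≠ 0 := cc_ne_zero ha0 ha1
    have hc2 : cc a * cc a = 1 - (a:ℂ) * a := cc_mul_self ha0 ha1
    have hW : conj ((a:ℂ)*P1 + cc a*R1) * ((a:ℂ)*P1 + cc a*R1)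
        + conj ((a:ℂ)*P2 + cc a*R2) * ((a:ℂ)*P2 + cc a*R2) = 1 := by
      simp only [map_add, map_mul, conj_cc, Complex.conj_ofReal]
      linear_combination (a:ℂ)^2*n1 + (cc a)^2*n2 + (a:ℂ)*(cc a)*o1 + (a:ℂ)*(cc a)*o2 + hc2
    have hpw : conj P1 * ((a:ℂ)*P1 + cc a*R1) + conj P2 * ((a:ℂ)*P2 + cc a*R2) = (a:ℂ) := by
      linear_combination (a:ℂ)*n1 + (cc a)*o1
    cases bt' with
    | e1 b =>
      obtain ⟨hb0, hb1⟩ := hbt'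
      have hd : cc b ≠ 0 := cc_ne_zero hb0 hb1
      have hd2 : cc b * cc b = 1 - (b:ℂ) * b := cc_mul_self hb0 hb1
      simp only [tup1, tup2, Prod.smul_mk, smul_eq_mul, Prod.mk_add_mk, Prod.mk.injEq,
        mul_zero, mul_one, zero_mul, one_mul, add_zero, zero_add] at h1 h2
      obtain ⟨c1, c2, c3, c4⟩ := h1
      obtain ⟨d1, d2, d3, d4⟩ := h2
      have split : P2 * (cc b * P1 - (b:ℂ) * P2) = 0 := by
        linear_combination cc b * c2 - (b:ℂ) * c4
      rcases mul_eq_zero.mp split with hP2 | hsub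
      · -- P2 = 0, so β = 0
        have hβ : β = 0 := by
          refine elim2 hd ?_
          linear_combination -c4 + P2 * hP2
        have hR1 : R1 = 0 := by
          have h := hU2; rw [hP2] at h; simpa using h
        have hP1u : conj P1 * P1 = 1 := unit1 n1 hP2
        have hR2u : conj R2 * R2 = 1 := unit1' n2 hR1
        have hβ' : β' ≠ 0 := fun h => hdet (by rw [hβ, h]; ring)
        have dsplit : ((a:ℂ)*P2 + cc a*R2) * (cc b * ((a:ℂ)*P1 + cc a*R1)
            - (b:ℂ) * ((a:ℂ)*P2 + cc a*R2)) = 0 := by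
          linear_combination cc b * d2 - (b:ℂ) * d4
        rcases mul_eq_zero.mp dsplit with hW2 | hsub2
        · -- W2 = 0 : impossible since R2 ≠ 0
          have hcr : cc a * R2 = 0 := by linear_combination hW2 - (a:ℂ)*hP2
          have hR2 : R2 = 0 := (mul_eq_zero.mp hcr).resolve_left hc
          exact absurd hR2u (by rw [hR2]; simp)
        · -- cc b * W1 = b * W2, giving α' = 0 and the endgame
          have hα' : α' = 0 := by
            refine elim2 hd ?_
            linear_combination
              (cc b*((a:ℂ)*P1 + cc a*R1) + (b:ℂ)*((a:ℂ)*P2 + cc a*R2))*hsub2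
              - (cc b*cc b)*d1 + ((b:ℂ)*(b:ℂ))*d4
          have e1q : (a:ℂ)^2*(P1*P1) = β'*(b:ℂ)^2 := by
            linear_combination d1 - (2*(a:ℂ)*(cc a)*P1 + cc a*cc a*R1)*hR1 + hα'
          have e2q : (1 - (a:ℂ)^2)*(R2*R2) = β'*(1-(b:ℂ)^2) := by
            linear_combination d4 - (R2*R2)*hc2 + β'*hd2
              - ((a:ℂ)*(a:ℂ)*P2 + 2*(a:ℂ)*(cc a)*R2)*hP2
          have e1qc := congrArg (starRingEnd ℂ) e1q
          have e2qc := congrArg (starRingEnd ℂ) e2q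
          simp only [map_mul, map_add, map_sub, map_one, map_pow, Complex.conj_ofReal] at e1qc e2qc
          have A1 : (a:ℂ)^4 = conj β' * β' * (b:ℂ)^4 := by
            linear_combination mul_eq' e1q e1qc - (a:ℂ)^4*(conj P1*P1+1)*hP1u
          have A2 : (1-(a:ℂ)^2)^2 = conj β' * β' * (1-(b:ℂ)^2)^2 := by
            linear_combination mul_eq' e2q e2qc - (1-(a:ℂ)^2)^2*(conj R2*R2+1)*hR2u
          have final : ((a:ℂ)^2*(1-(b:ℂ)^2))^2 = ((1-(a:ℂ)^2)*(b:ℂ)^2)^2 := by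
            linear_combination A1*(1-(b:ℂ)^2)^2 - A2*(b:ℂ)^4
          exact congrArg BType.e1 (param_endgame ha0 ha1 hb0 hb1 final)
      · -- cc b * P1 = b * P2 : α = 0
        have hsq : (P1*P1 - β*((b:ℂ)*(b:ℂ))) * (cc b*cc b) = 0 := by
          linear_combination (cc b*P1 + (b:ℂ)*P2)*hsub + (b:ℂ)*(b:ℂ)*c4
        have hX : P1*P1 - β*((b:ℂ)*(b:ℂ)) = 0 := by
          rcases mul_eq_zero.mp hsq with h | h
          · exact h
          · exact absurd (mul_self_eq_zero.mp h) hd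
        have hα : α = 0 := by linear_combination hX - c1
        have hβn : β ≠ 0 := fun h => hdet (by rw [hα, h]; ring)
        have dsplit : ((a:ℂ)*P2 + cc a*R2) * (cc b * ((a:ℂ)*P1 + cc a*R1)
            - (b:ℂ) * ((a:ℂ)*P2 + cc a*R2)) = 0 := by
          linear_combination cc b * d2 - (b:ℂ) * d4
        rcases mul_eq_zero.mp dsplit with hW2 | hsub2
        · -- W2 = 0 : β' = 0, endgame
          have hβ' : β' = 0 := by
            refine elim2 hd ?_
            linear_combination -d4 + ((a:ℂ)*P2 + cc a*R2)*hW2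
          have hW1u : conj ((a:ℂ)*P1 + cc a*R1) * ((a:ℂ)*P1 + cc a*R1) = 1 := by
            have h := hW; rw [hW2] at h; simpa using h
          simp only [map_add, map_mul, conj_cc, Complex.conj_ofReal] at hW1u
          have hpw1 : conj P1 * ((a:ℂ)*P1 + cc a*R1) = (a:ℂ) := by
            have h := hpw; rw [hW2] at h; simpa using h
          have hpwc := congrArg (starRingEnd ℂ) hpw1
          simp only [map_mul, map_add, conj_cc, Complex.conj_ofReal,
            RingHomCompTriple.comp_apply, RingHom.id_apply] at hpwc
          have hPa : conj P1 * P1 = (a:ℂ)*(a:ℂ) := by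
            linear_combination mul_eq' hpw1 hpwc - (conj P1*P1)*hW1u
          have hX2 : P2*P2 = β*(cc b*cc b) := by linear_combination c4
          have hX1 : P1*P1 = β*((b:ℂ)*(b:ℂ)) := by linear_combination hX
          have hX1c := congrArg (starRingEnd ℂ) hX1
          have hX2c := congrArg (starRingEnd ℂ) hX2
          simp only [map_mul, conj_cc, Complex.conj_ofReal] at hX1c hX2c
          have hQ : conj P2 * P2 = 1 - (a:ℂ)*(a:ℂ) := by linear_combination n1 - hPa
          have B1 : (a:ℂ)^4 = conj β * β * (b:ℂ)^4 := by
            linear_combination mul_eq' hX1 hX1c - (conj P1*P1 + (a:ℂ)*(a:ℂ))*hPa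
          have B2 : (1-(a:ℂ)^2)^2 = conj β * β * (1-(b:ℂ)^2)^2 := by
            linear_combination mul_eq' hX2 hX2c - (conj P2*P2 + 1 - (a:ℂ)^2)*hQ
              + conj β*β*(cc b*cc b + 1 - (b:ℂ)^2)*hd2
          have final : ((a:ℂ)^2*(1-(b:ℂ)^2))^2 = ((1-(a:ℂ)^2)*(b:ℂ)^2)^2 := by
            linear_combination B1*(1-(b:ℂ)^2)^2 - B2*(b:ℂ)^4
          exact congrArg BType.e1 (param_endgame ha0 ha1 hb0 hb1 final)
        · -- cc b * W1 = b * W2 : α' = 0, contradicting det with α = 0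
          have hα' : α' = 0 := by
            refine elim2 hd ?_
            linear_combination
              (cc b*((a:ℂ)*P1 + cc a*R1) + (b:ℂ)*((a:ℂ)*P2 + cc a*R2))*hsub2
              - (cc b*cc b)*d1 + ((b:ℂ)*(b:ℂ))*d4
          exact absurd (by rw [hα, hα']; ring : α * β' - α' * β = 0) hdet
    | e2 b =>
      obtain ⟨hb0, hb1⟩ := hbt'
      have hd : cc b ≠ 0 := cc_ne_zero hb0 hb1
      simp only [tup1, tup2, Prod.smul_mk, smul_eq_mul, Prod.mk_add_mk, Prod.mk.injEq,
        mul_zero, mul_one, zero_mul, one_mul, add_zero, zero_add] at h1 h2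
      obtain ⟨c1, c2, c3, c4⟩ := h1
      obtain ⟨d1, d2, d3, d4⟩ := h2
      -- c2 : P1*P2 = α*cc b ; c3 : P2*P1 = β*cc b ; c4 : P2*P2 = 0
      have hP2 : P2 = 0 := mul_self_eq_zero.mp (by linear_combination c4)
      have hα : α = 0 := by
        refine elim1 hd ?_
        linear_combination -c2 + P1*hP2
      have hβ : β = 0 := by
        refine elim1 hd ?_
        linear_combination -c3 + P1*hP2
      exact absurd (by rw [hα, hβ]; ring : α * β' - α' * β = 0) hdet
    | e3 m =>
      simp only [tup1, tup2, Prod.smul_mk, smul_eq_mul, Prod.mk_add_mk, Prod.mk.injEq,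
        mul_zero, mul_one, zero_mul, one_mul, add_zero, zero_add] at h1 h2
      obtain ⟨c1, c2, c3, c4⟩ := h1
      obtain ⟨d1, d2, d3, d4⟩ := h2
      -- c4 : P2*P2 = 0 ; d4 : W2*W2 = 0
      have hP2 : P2 = 0 := mul_self_eq_zero.mp (by linear_combination c4)
      have hW2 : (a:ℂ)*P2 + cc a*R2 = 0 := mul_self_eq_zero.mp (by linear_combination d4)
      have hR2 : R2 = 0 := by
        have h : cc a * R2 = 0 := by linear_combination hW2 - (a:ℂ)*hP2
        exact (mul_eq_zero.mp h).resolve_left hc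
      have hP1 : P1 = 0 := by
        have h := hU4; rw [hR2] at h; simpa using h.symm
      rw [hP1, hP2] at n1; simp at n1
    | e4 =>
      simp only [tup1, tup2, Prod.smul_mk, smul_eq_mul, Prod.mk_add_mk, Prod.mk.injEq,
        mul_zero, mul_one, zero_mul, one_mul, add_zero, zero_add] at h1 h2
      obtain ⟨c1, c2, c3, c4⟩ := h1
      obtain ⟨d1, d2, d3, d4⟩ := h2
      have hP2 : P2 = 0 := mul_self_eq_zero.mp (by linear_combination c4)
      have hW2 : (a:ℂ)*P2 + cc a*R2 = 0 := mul_self_eq_zero.mp (by linear_combination d4)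
      have hR2 : R2 = 0 := by
        have h : cc a * R2 = 0 := by linear_combination hW2 - (a:ℂ)*hP2
        exact (mul_eq_zero.mp h).resolve_left hc
      have hP1 : P1 = 0 := by
        have h := hU4; rw [hR2] at h; simpa using h.symm
      rw [hP1, hP2] at n1; simp at n1
    | e5 =>
      simp only [tup1, tup2, Prod.smul_mk, smul_eq_mul, Prod.mk_add_mk, Prod.mk.injEq,
        mul_zero, mul_one, zero_mul, one_mul, add_zero, zero_add] at h1 h2
      obtain ⟨c1, c2, c3, c4⟩ := h1
      obtain ⟨d1, d2, d3, d4⟩ := h2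
      have hP2 : P2 = 0 := mul_self_eq_zero.mp (by linear_combination c4)
      have hW2 : (a:ℂ)*P2 + cc a*R2 = 0 := mul_self_eq_zero.mp (by linear_combination d4)
      have hR2 : R2 = 0 := by
        have h : cc a * R2 = 0 := by linear_combination hW2 - (a:ℂ)*hP2
        exact (mul_eq_zero.mp h).resolve_left hc
      have hP1 : P1 = 0 := by
        have h := hU4; rw [hR2] at h; simpa using h.symm
      rw [hP1, hP2] at n1; simp at n1
  | e2 a =>
    obtain ⟨ha0, ha1⟩ := hbt
    have hc : cc a ≠ 0 := cc_ne_zero ha0 ha1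
    have hc2 : cc a * cc a = 1 - (a:ℂ) * a := cc_mul_self ha0 ha1
    have hW : conj ((a:ℂ)*P1 + cc a*R1) * ((a:ℂ)*P1 + cc a*R1)
        + conj ((a:ℂ)*P2 + cc a*R2) * ((a:ℂ)*P2 + cc a*R2) = 1 := by
      simp only [map_add, map_mul, conj_cc, Complex.conj_ofReal]
      linear_combination (a:ℂ)^2*n1 + (cc a)^2*n2 + (a:ℂ)*(cc a)*o1 + (a:ℂ)*(cc a)*o2 + hc2
    have hpw : conj P1 * ((a:ℂ)*P1 + cc a*R1) + conj P2 * ((a:ℂ)*P2 + cc a*R2) = (a:ℂ) := by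
      linear_combination (a:ℂ)*n1 + (cc a)*o1
    cases bt' with
    | e1 b =>
      obtain ⟨hb0, hb1⟩ := hbt'
      have hd : cc b ≠ 0 := cc_ne_zero hb0 hb1
      simp only [tup1, tup2, Prod.smul_mk, smul_eq_mul, Prod.mk_add_mk, Prod.mk.injEq,
        mul_zero, mul_one, zero_mul, one_mul, add_zero, zero_add] at h1 h2
      obtain ⟨c1, c2, c3, c4⟩ := h1
      obtain ⟨d1, d2, d3, d4⟩ := h2
      -- T1 = p⊗w : split W2*(d*P1 - b*P2) = 0
      have split : ((a:ℂ)*P2 + cc a*R2) * (cc b * P1 - (b:ℂ) * P2) = 0 := by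
        linear_combination cc b * c2 - (b:ℂ) * c4
      rcases mul_eq_zero.mp split with hW2 | hsub
      · -- W2 = 0 : β = 0 from c4, β' = 0 from d4, det = 0
        have hβ : β = 0 := by
          refine elim2 hd ?_
          linear_combination -c4 + P2*hW2
        have hβ' : β' = 0 := by
          refine elim2 hd ?_
          linear_combination -d4 + P2*hW2
        exact absurd (by rw [hβ, hβ']; ring : α * β' - α' * β = 0) hdet
      · -- cc b*P1 = b*P2
        have dsplit : P2 * (cc b * ((a:ℂ)*P1 + cc a*R1) - (b:ℂ) * ((a:ℂ)*P2 + cc a*R2)) = 0 := by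
          linear_combination cc b * d2 - (b:ℂ) * d4
        rcases mul_eq_zero.mp dsplit with hP2 | hsub2
        · have hP1 : P1 = 0 := by
            refine elim1 hd ?_
            linear_combination hsub + (b:ℂ)*hP2
          rw [hP1, hP2] at n1; simp at n1
        · have h5 : cc a * (cc b*R1 - (b:ℂ)*R2) = 0 := by
            linear_combination hsub2 - (a:ℂ)*hsub
          have hsub3 : cc b*R1 - (b:ℂ)*R2 = 0 := (mul_eq_zero.mp h5).resolve_left hc
          have hDz : cc b * (P1*R2 - P2*R1) = 0 := by
            linear_combination R2*hsub - P2*hsub3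
          exact absurd ((mul_eq_zero.mp hDz).resolve_left hd) hD
    | e2 b =>
      obtain ⟨hb0, hb1⟩ := hbt'
      have hd : cc b ≠ 0 := cc_ne_zero hb0 hb1
      have hd2 : cc b * cc b = 1 - (b:ℂ) * b := cc_mul_self hb0 hb1
      simp only [tup1, tup2, Prod.smul_mk, smul_eq_mul, Prod.mk_add_mk, Prod.mk.injEq,
        mul_zero, mul_one, zero_mul, one_mul, add_zero, zero_add] at h1 h2
      obtain ⟨c1, c2, c3, c4⟩ := h1
      obtain ⟨d1, d2, d3, d4⟩ := h2
      -- c4 : P2*W2 = 0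
      have c4' : P2 * ((a:ℂ)*P2 + cc a*R2) = 0 := by linear_combination c4
      rcases mul_eq_zero.mp c4' with hP2 | hW2
      · -- P2 = 0
        have hβ : β = 0 := by
          refine elim1 hd ?_
          linear_combination -c3 + ((a:ℂ)*P1 + cc a*R1)*hP2
        have hα' : α' = 0 := by
          refine elim1 hd ?_
          linear_combination -d2 + ((a:ℂ)*P1 + cc a*R1)*hP2
        have hαn : α ≠ 0 := fun h => hdet (by rw [h, hβ]; ring)
        have hR1 : R1 = 0 := by
          have h := hU2; rw [hP2] at h; simpa using h
        have hP1u : conj P1 * P1 = 1 := unit1 n1 hP2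
        have hR2u : conj R2 * R2 = 1 := unit1' n2 hR1
        have e2qA : cc a*(P1*R2) = α*cc b := by
          linear_combination c2 - (a:ℂ)*P1*hP2
        have e2qB : cc a*(R2*P1) = β'*cc b := by
          linear_combination d3 - (a:ℂ)*P1*hP2
        have e2qC : (a:ℂ)*(P1*P1) = α*(b:ℂ) := by
          linear_combination c1 - cc a*P1*hR1 + (b:ℂ)*hβ
        have e2qAc := congrArg (starRingEnd ℂ) e2qA
        have e2qCc := congrArg (starRingEnd ℂ) e2qC
        simp only [map_mul, conj_cc, Complex.conj_ofReal] at e2qAc e2qCc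
        have X1 : (a:ℂ)^2 = conj α*α*(b:ℂ)^2 := by
          linear_combination mul_eq' e2qC e2qCc - (a:ℂ)^2*(1+conj P1*P1)*hP1u
        have X2 : (1-(a:ℂ)^2) = conj α*α*(1-(b:ℂ)^2) := by
          linear_combination mul_eq' e2qA e2qAc - hc2 - (cc a*cc a)*hP1u
            - (cc a*cc a)*(conj P1*P1)*hR2u + conj α*α*hd2
        have final : (a:ℂ)^2*(1-(b:ℂ)^2) = (1-(a:ℂ)^2)*(b:ℂ)^2 := by
          linear_combination X1*(1-(b:ℂ)^2) - X2*(b:ℂ)^2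
        exact congrArg BType.e2 (param_endgame' ha0 ha1 hb0 hb1 final)
      · -- W2 = 0
        have hα : α = 0 := by
          refine elim1 hd ?_
          linear_combination -c2 + P1*hW2
        have hβ' : β' = 0 := by
          refine elim1 hd ?_
          linear_combination -d3 + P1*hW2
        have hα'n : α' ≠ 0 := fun h => hdet (by rw [hα, h]; ring)
        have hβn : β ≠ 0 := fun h => hdet (by rw [hα, h]; ring)
        have hW1u : conj ((a:ℂ)*P1 + cc a*R1) * ((a:ℂ)*P1 + cc a*R1) = 1 := by
          have h := hW; rw [hW2] at h; simpa using h
        simp only [map_add, map_mul, conj_cc, Complex.conj_ofReal] at hW1u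
        have hpw1 : conj P1 * ((a:ℂ)*P1 + cc a*R1) = (a:ℂ) := by
          have h := hpw; rw [hW2] at h; simpa using h
        have hpwc := congrArg (starRingEnd ℂ) hpw1
        simp only [map_mul, map_add, conj_cc, Complex.conj_ofReal,
          RingHomCompTriple.comp_apply, RingHom.id_apply] at hpwc
        have hPa : conj P1 * P1 = (a:ℂ)*(a:ℂ) := by
          linear_combination mul_eq' hpw1 hpwc - (conj P1*P1)*hW1u
        have hQ : conj P2 * P2 = 1 - (a:ℂ)*(a:ℂ) := by linear_combination n1 - hPa
        have ec1 : P1*((a:ℂ)*P1 + cc a*R1) = β*(b:ℂ) := by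
          linear_combination c1 + (b:ℂ)*hα
        have ec3 : P2*((a:ℂ)*P1 + cc a*R1) = β*cc b := by
          linear_combination c3
        have ec1c := congrArg (starRingEnd ℂ) ec1
        have ec3c := congrArg (starRingEnd ℂ) ec3
        simp only [map_mul, map_add, conj_cc, Complex.conj_ofReal] at ec1c ec3c
        have X1 : (a:ℂ)*(a:ℂ) = conj β*β*((b:ℂ)*(b:ℂ)) := by
          linear_combination mul_eq' ec1 ec1c - hPa - (conj P1*P1)*hW1u
        have X2 : 1 - (a:ℂ)*(a:ℂ) = conj β*β*(cc b*cc b) := by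
          linear_combination mul_eq' ec3 ec3c - hQ - (conj P2*P2)*hW1u
        have final : (a:ℂ)^2*(1-(b:ℂ)^2) = (1-(a:ℂ)^2)*(b:ℂ)^2 := by
          linear_combination X1*(1-(b:ℂ)^2) - X2*(b:ℂ)^2 - conj β*β*(b:ℂ)^2*hd2
        exact congrArg BType.e2 (param_endgame' ha0 ha1 hb0 hb1 final)
    | e3 m =>
      have hm : m ≠ 0 := hbt'
      simp only [tup1, tup2, Prod.smul_mk, smul_eq_mul, Prod.mk_add_mk, Prod.mk.injEq,
        mul_zero, mul_one, zero_mul, one_mul, add_zero, zero_add] at h1 h2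
      obtain ⟨c1, c2, c3, c4⟩ := h1
      obtain ⟨d1, d2, d3, d4⟩ := h2
      -- c4 : P2*W2 = 0
      have c4' : P2 * ((a:ℂ)*P2 + cc a*R2) = 0 := by linear_combination c4
      rcases mul_eq_zero.mp c4' with hP2 | hW2
      · have hβ : β = 0 := by linear_combination -c3 + ((a:ℂ)*P1 + cc a*R1)*hP2
        have hβ' : β' = 0 := by
          refine elim1 hm ?_
          linear_combination -d2 + ((a:ℂ)*P1 + cc a*R1)*hP2
        exact absurd (by rw [hβ, hβ']; ring : α * β' - α' * β = 0) hdet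
      · have hβ' : β' = 0 := by linear_combination -d3 + P1*hW2
        have hβ : β = 0 := by
          refine elim1 hm ?_
          linear_combination -c2 + P1*hW2
        exact absurd (by rw [hβ, hβ']; ring : α * β' - α' * β = 0) hdet
    | e4 =>
      simp only [tup1, tup2, Prod.smul_mk, smul_eq_mul, Prod.mk_add_mk, Prod.mk.injEq,
        mul_zero, mul_one, zero_mul, one_mul, add_zero, zero_add] at h1 h2
      obtain ⟨c1, c2, c3, c4⟩ := h1
      obtain ⟨d1, d2, d3, d4⟩ := h2
      -- c2 : P1*W2 = 0
      have c2' : P1 * ((a:ℂ)*P2 + cc a*R2) = 0 := by linear_combination c2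
      rcases mul_eq_zero.mp c2' with hP1 | hW2
      · have hα : α = 0 := by linear_combination -c1 + ((a:ℂ)*P1 + cc a*R1)*hP1
        have hP2n : P2 ≠ 0 := ne_zero_of_unit (unit1' n1 hP1)
        have hW1 : (a:ℂ)*P1 + cc a*R1 = 0 := by
          have h : ((a:ℂ)*P1 + cc a*R1) * P2 = 0 := by linear_combination d2
          exact (mul_eq_zero.mp h).resolve_right hP2n
        have hβ : β = 0 := by linear_combination -c3 + P2*hW1
        have hβ' : β' = 0 := by linear_combination -d3 + ((a:ℂ)*P2 + cc a*R2)*hP1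
        exact absurd (by rw [hβ, hβ']; ring : α * β' - α' * β = 0) hdet
      · have hW1u : conj ((a:ℂ)*P1 + cc a*R1) * ((a:ℂ)*P1 + cc a*R1) = 1 := by
          have h := hW; rw [hW2] at h; simpa using h
        have hW1n : ((a:ℂ)*P1 + cc a*R1) ≠ 0 := ne_zero_of_unit hW1u
        have hP2 : P2 = 0 := by
          have h : ((a:ℂ)*P1 + cc a*R1) * P2 = 0 := by linear_combination d2
          exact (mul_eq_zero.mp h).resolve_left hW1n
        have hβ : β = 0 := by linear_combination -c3 + ((a:ℂ)*P1 + cc a*R1)*hP2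
        have hβ' : β' = 0 := by linear_combination -d3 + P1*hW2
        exact absurd (by rw [hβ, hβ']; ring : α * β' - α' * β = 0) hdet
    | e5 =>
      simp only [tup1, tup2, Prod.smul_mk, smul_eq_mul, Prod.mk_add_mk, Prod.mk.injEq,
        mul_zero, mul_one, zero_mul, one_mul, add_zero, zero_add] at h1 h2
      obtain ⟨c1, c2, c3, c4⟩ := h1
      obtain ⟨d1, d2, d3, d4⟩ := h2
      -- c3 : P2*W1 = 0
      have c3' : P2 * ((a:ℂ)*P1 + cc a*R1) = 0 := by linear_combination c3
      rcases mul_eq_zero.mp c3' with hP2 | hW1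
      · have hβ' : β' = 0 := by linear_combination -d2 + ((a:ℂ)*P1 + cc a*R1)*hP2
        have hP1n : P1 ≠ 0 := ne_zero_of_unit (unit1 n1 hP2)
        have hW2 : (a:ℂ)*P2 + cc a*R2 = 0 := by
          have h : ((a:ℂ)*P2 + cc a*R2) * P1 = 0 := by linear_combination d3
          exact (mul_eq_zero.mp h).resolve_right hP1n
        have hβ : β = 0 := by linear_combination -c2 + P1*hW2
        exact absurd (by rw [hβ, hβ']; ring : α * β' - α' * β = 0) hdet
      · have hW2u : conj ((a:ℂ)*P2 + cc a*R2) * ((a:ℂ)*P2 + cc a*R2) = 1 := by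
          have h := hW; rw [hW1] at h; simpa using h
        have hW2n : ((a:ℂ)*P2 + cc a*R2) ≠ 0 := ne_zero_of_unit hW2u
        have hP2 : P2 = 0 := by
          have h : P2 * ((a:ℂ)*P2 + cc a*R2) = 0 := by linear_combination c4
          exact (mul_eq_zero.mp h).resolve_right hW2n
        have hβ' : β' = 0 := by linear_combination -d2 + ((a:ℂ)*P1 + cc a*R1)*hP2
        have hP1 : P1 = 0 := by
          have h : ((a:ℂ)*P2 + cc a*R2) * P1 = 0 := by linear_combination d3 - (0:ℂ)*hβ'
          exact (mul_eq_zero.mp h).resolve_left hW2n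
        rw [hP1, hP2] at n1; simp at n1
  | e3 l =>
    have hl : l ≠ 0 := hbt
    cases bt' with
    | e1 b =>
      obtain ⟨hb0, hb1⟩ := hbt'
      have hd : cc b ≠ 0 := cc_ne_zero hb0 hb1
      simp only [tup1, tup2, Prod.smul_mk, smul_eq_mul, Prod.mk_add_mk, Prod.mk.injEq,
        mul_zero, mul_one, zero_mul, one_mul, add_zero, zero_add] at h1 h2
      obtain ⟨c1, c2, c3, c4⟩ := h1
      obtain ⟨d1, d2, d3, d4⟩ := h2
      have split : P2 * (cc b * P1 - (b:ℂ) * P2) = 0 := by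
        linear_combination cc b * c2 - (b:ℂ) * c4
      rcases mul_eq_zero.mp split with hP2 | hsub
      · have hβ : β = 0 := by
          refine elim2 hd ?_
          linear_combination -c4 + P2*hP2
        have hβ' : β' = 0 := by
          refine elim2 hd ?_
          linear_combination -d4 + (R2 + l*R2)*hP2
        exact absurd (by rw [hβ, hβ']; ring : α * β' - α' * β = 0) hdet
      · have X1 : P2 * (cc b*R1 - (b:ℂ)*R2) = 0 := by
          linear_combination cc b*d2 - (b:ℂ)*d4 - l*R2*hsub
        rcases mul_eq_zero.mp X1 with hP2 | hsub3
        · have hP1 : P1 = 0 := by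
            refine elim1 hd ?_
            linear_combination hsub + (b:ℂ)*hP2
          rw [hP1, hP2] at n1; simp at n1
        · have hDz : cc b * (P1*R2 - P2*R1) = 0 := by
            linear_combination R2*hsub - P2*hsub3
          exact absurd ((mul_eq_zero.mp hDz).resolve_left hd) hD
    | e2 b =>
      obtain ⟨hb0, hb1⟩ := hbt'
      have hd : cc b ≠ 0 := cc_ne_zero hb0 hb1
      simp only [tup1, tup2, Prod.smul_mk, smul_eq_mul, Prod.mk_add_mk, Prod.mk.injEq,
        mul_zero, mul_one, zero_mul, one_mul, add_zero, zero_add] at h1 h2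
      obtain ⟨c1, c2, c3, c4⟩ := h1
      obtain ⟨d1, d2, d3, d4⟩ := h2
      have hP2 : P2 = 0 := mul_self_eq_zero.mp (by linear_combination c4)
      have hα : α = 0 := by
        refine elim1 hd ?_
        linear_combination -c2 + P1*hP2
      have hβ : β = 0 := by
        refine elim1 hd ?_
        linear_combination -c3 + P1*hP2
      exact absurd (by rw [hα, hβ]; ring : α * β' - α' * β = 0) hdet
    | e3 m =>
      have hm : m ≠ 0 := hbt'
      simp only [tup1, tup2, Prod.smul_mk, smul_eq_mul, Prod.mk_add_mk, Prod.mk.injEq,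
        mul_zero, mul_one, zero_mul, one_mul, add_zero, zero_add] at h1 h2
      obtain ⟨c1, c2, c3, c4⟩ := h1
      obtain ⟨d1, d2, d3, d4⟩ := h2
      have hP2 : P2 = 0 := mul_self_eq_zero.mp (by linear_combination c4)
      have hβ : β = 0 := by linear_combination -c3 + P1*hP2
      have hR1 : R1 = 0 := by
        have h := hU2; rw [hP2] at h; simpa using h
      have hP1n : P1 ≠ 0 := ne_zero_of_unit (unit1 n1 hP2)
      have hR2n : R2 ≠ 0 := ne_zero_of_unit (unit1' n2 hR1)
      have hlm : (l - m) * (P1*R2) = 0 := by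
        linear_combination d2 - m*d3 + (l*m*R1 - R1)*hP2
      have : l - m = 0 := by
        rcases mul_eq_zero.mp hlm with h | h
        · exact h
        · rcases mul_eq_zero.mp h with h' | h'
          · exact absurd h' hP1n
          · exact absurd h' hR2n
      rw [sub_eq_zero.mp this]
    | e4 =>
      simp only [tup1, tup2, Prod.smul_mk, smul_eq_mul, Prod.mk_add_mk, Prod.mk.injEq,
        mul_zero, mul_one, zero_mul, one_mul, add_zero, zero_add] at h1 h2
      obtain ⟨c1, c2, c3, c4⟩ := h1
      obtain ⟨d1, d2, d3, d4⟩ := h2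
      have hP2 : P2 = 0 := mul_self_eq_zero.mp (by linear_combination c4)
      have hR1 : R1 = 0 := by
        have h := hU2; rw [hP2] at h; simpa using h
      have hP1n : P1 ≠ 0 := ne_zero_of_unit (unit1 n1 hP2)
      have hR2 : R2 = 0 := by
        have h : l * (P1 * R2) = 0 := by linear_combination d2 - R1*hP2 - P2*hR1 + P2*hR1
        rcases mul_eq_zero.mp h with h' | h'
        · exact absurd h' hl
        · exact (mul_eq_zero.mp h').resolve_left hP1n
      rw [hR1, hR2] at n2; simp at n2
    | e5 =>
      simp only [tup1, tup2, Prod.smul_mk, smul_eq_mul, Prod.mk_add_mk, Prod.mk.injEq,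
        mul_zero, mul_one, zero_mul, one_mul, add_zero, zero_add] at h1 h2
      obtain ⟨c1, c2, c3, c4⟩ := h1
      obtain ⟨d1, d2, d3, d4⟩ := h2
      have hP2 : P2 = 0 := mul_self_eq_zero.mp (by linear_combination c4)
      have hR1 : R1 = 0 := by
        have h := hU2; rw [hP2] at h; simpa using h
      have hP1n : P1 ≠ 0 := ne_zero_of_unit (unit1 n1 hP2)
      -- d3 : R2*P1 + l*(P2*R1) = 0
      have hR2 : R2 = 0 := by
        have h : R2 * P1 = 0 := by linear_combination d3 - l*R1*hP2
        exact (mul_eq_zero.mp h).resolve_right hP1n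
      rw [hR1, hR2] at n2; simp at n2
  | e4 =>
    cases bt' with
    | e1 b =>
      obtain ⟨hb0, hb1⟩ := hbt'
      have hd : cc b ≠ 0 := cc_ne_zero hb0 hb1
      simp only [tup1, tup2, Prod.smul_mk, smul_eq_mul, Prod.mk_add_mk, Prod.mk.injEq,
        mul_zero, mul_one, zero_mul, one_mul, add_zero, zero_add] at h1 h2
      obtain ⟨c1, c2, c3, c4⟩ := h1
      obtain ⟨d1, d2, d3, d4⟩ := h2
      have split : P2 * (cc b * P1 - (b:ℂ) * P2) = 0 := by
        linear_combination cc b * c2 - (b:ℂ) * c4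
      rcases mul_eq_zero.mp split with hP2 | hsub
      · have hβ : β = 0 := by
          refine elim2 hd ?_
          linear_combination -c4 + P2*hP2
        have hβ' : β' = 0 := by
          refine elim2 hd ?_
          linear_combination -d4 + R2*hP2
        exact absurd (by rw [hβ, hβ']; ring : α * β' - α' * β = 0) hdet
      · have X1 : P2 * (cc b*R1 - (b:ℂ)*R2) = 0 := by
          linear_combination cc b*d2 - (b:ℂ)*d4
        rcases mul_eq_zero.mp X1 with hP2 | hsub3
        · have hP1 : P1 = 0 := by
            refine elim1 hd ?_
            linear_combination hsub + (b:ℂ)*hP2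
          rw [hP1, hP2] at n1; simp at n1
        · have hDz : cc b * (P1*R2 - P2*R1) = 0 := by
            linear_combination R2*hsub - P2*hsub3
          exact absurd ((mul_eq_zero.mp hDz).resolve_left hd) hD
    | e2 b =>
      obtain ⟨hb0, hb1⟩ := hbt'
      have hd : cc b ≠ 0 := cc_ne_zero hb0 hb1
      simp only [tup1, tup2, Prod.smul_mk, smul_eq_mul, Prod.mk_add_mk, Prod.mk.injEq,
        mul_zero, mul_one, zero_mul, one_mul, add_zero, zero_add] at h1 h2
      obtain ⟨c1, c2, c3, c4⟩ := h1
      obtain ⟨d1, d2, d3, d4⟩ := h2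
      have hP2 : P2 = 0 := mul_self_eq_zero.mp (by linear_combination c4)
      have hα : α = 0 := by
        refine elim1 hd ?_
        linear_combination -c2 + P1*hP2
      have hβ : β = 0 := by
        refine elim1 hd ?_
        linear_combination -c3 + P1*hP2
      exact absurd (by rw [hα, hβ]; ring : α * β' - α' * β = 0) hdet
    | e3 m =>
      have hm : m ≠ 0 := hbt'
      simp only [tup1, tup2, Prod.smul_mk, smul_eq_mul, Prod.mk_add_mk, Prod.mk.injEq,
        mul_zero, mul_one, zero_mul, one_mul, add_zero, zero_add] at h1 h2
      obtain ⟨c1, c2, c3, c4⟩ := h1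
      obtain ⟨d1, d2, d3, d4⟩ := h2
      have hP2 : P2 = 0 := mul_self_eq_zero.mp (by linear_combination c4)
      have hβ : β = 0 := by linear_combination -c3 + P1*hP2
      have hβ' : β' = 0 := by
        refine elim1 hm ?_
        linear_combination -d2 + R1*hP2
      exact absurd (by rw [hβ, hβ']; ring : α * β' - α' * β = 0) hdet
    | e4 => rfl
    | e5 =>
      simp only [tup1, tup2, Prod.smul_mk, smul_eq_mul, Prod.mk_add_mk, Prod.mk.injEq,
        mul_zero, mul_one, zero_mul, one_mul, add_zero, zero_add] at h1 h2
      obtain ⟨c1, c2, c3, c4⟩ := h1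
      obtain ⟨d1, d2, d3, d4⟩ := h2
      have hP2 : P2 = 0 := mul_self_eq_zero.mp (by linear_combination c4)
      have hP1n : P1 ≠ 0 := ne_zero_of_unit (unit1 n1 hP2)
      have hR2 : R2 = 0 := by
        have h : R2 * P1 = 0 := by linear_combination d3
        exact (mul_eq_zero.mp h).resolve_right hP1n
      have hR1 : R1 = 0 := by
        have h := hU2; rw [hP2] at h; simpa using h
      rw [hR1, hR2] at n2; simp at n2
  | e5 =>
    cases bt' with
    | e1 b =>
      obtain ⟨hb0, hb1⟩ := hbt'
      have hd : cc b ≠ 0 := cc_ne_zero hb0 hb1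
      simp only [tup1, tup2, Prod.smul_mk, smul_eq_mul, Prod.mk_add_mk, Prod.mk.injEq,
        mul_zero, mul_one, zero_mul, one_mul, add_zero, zero_add] at h1 h2
      obtain ⟨c1, c2, c3, c4⟩ := h1
      obtain ⟨d1, d2, d3, d4⟩ := h2
      have split : P2 * (cc b * P1 - (b:ℂ) * P2) = 0 := by
        linear_combination cc b * c2 - (b:ℂ) * c4
      rcases mul_eq_zero.mp split with hP2 | hsub
      · have hβ : β = 0 := by
          refine elim2 hd ?_
          linear_combination -c4 + P2*hP2
        have hβ' : β' = 0 := by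
          refine elim2 hd ?_
          linear_combination -d4 + R2*hP2
        exact absurd (by rw [hβ, hβ']; ring : α * β' - α' * β = 0) hdet
      · have X1 : P2 * (cc b*R1 - (b:ℂ)*R2) = 0 := by
          linear_combination cc b*d3 - (b:ℂ)*d4
        rcases mul_eq_zero.mp X1 with hP2 | hsub3
        · have hP1 : P1 = 0 := by
            refine elim1 hd ?_
            linear_combination hsub + (b:ℂ)*hP2
          rw [hP1, hP2] at n1; simp at n1
        · have hDz : cc b * (P1*R2 - P2*R1) = 0 := by
            linear_combination R2*hsub - P2*hsub3
          exact absurd ((mul_eq_zero.mp hDz).resolve_left hd) hD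
    | e2 b =>
      obtain ⟨hb0, hb1⟩ := hbt'
      have hd : cc b ≠ 0 := cc_ne_zero hb0 hb1
      simp only [tup1, tup2, Prod.smul_mk, smul_eq_mul, Prod.mk_add_mk, Prod.mk.injEq,
        mul_zero, mul_one, zero_mul, one_mul, add_zero, zero_add] at h1 h2
      obtain ⟨c1, c2, c3, c4⟩ := h1
      obtain ⟨d1, d2, d3, d4⟩ := h2
      have hP2 : P2 = 0 := mul_self_eq_zero.mp (by linear_combination c4)
      have hα : α = 0 := by
        refine elim1 hd ?_
        linear_combination -c2 + P1*hP2
      have hβ : β = 0 := by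
        refine elim1 hd ?_
        linear_combination -c3 + P1*hP2
      exact absurd (by rw [hα, hβ]; ring : α * β' - α' * β = 0) hdet
    | e3 m =>
      have hm : m ≠ 0 := hbt'
      simp only [tup1, tup2, Prod.smul_mk, smul_eq_mul, Prod.mk_add_mk, Prod.mk.injEq,
        mul_zero, mul_one, zero_mul, one_mul, add_zero, zero_add] at h1 h2
      obtain ⟨c1, c2, c3, c4⟩ := h1
      obtain ⟨d1, d2, d3, d4⟩ := h2
      have hP2 : P2 = 0 := mul_self_eq_zero.mp (by linear_combination c4)
      have hR1 : R1 = 0 := by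
        have h := hU2; rw [hP2] at h; simpa using h
      have hP1n : P1 ≠ 0 := ne_zero_of_unit (unit1 n1 hP2)
      have hβ' : β' = 0 := by linear_combination -d3 + R1*hP2
      have hR2 : R2 = 0 := by
        have h : P1 * R2 = 0 := by linear_combination d2 + m*hβ'
        exact (mul_eq_zero.mp h).resolve_left hP1n
      rw [hR1, hR2] at n2; simp at n2
    | e4 =>
      simp only [tup1, tup2, Prod.smul_mk, smul_eq_mul, Prod.mk_add_mk, Prod.mk.injEq,
        mul_zero, mul_one, zero_mul, one_mul, add_zero, zero_add] at h1 h2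
      obtain ⟨c1, c2, c3, c4⟩ := h1
      obtain ⟨d1, d2, d3, d4⟩ := h2
      have hP2 : P2 = 0 := mul_self_eq_zero.mp (by linear_combination c4)
      have hP1n : P1 ≠ 0 := ne_zero_of_unit (unit1 n1 hP2)
      have hR2 : R2 = 0 := by
        have h : P1 * R2 = 0 := by linear_combination d2
        exact (mul_eq_zero.mp h).resolve_left hP1n
      have hR1 : R1 = 0 := by
        have h := hU2; rw [hP2] at h; simpa using h
      rw [hR1, hR2] at n2; simp at n2
    | e5 => rfl

/-- The core scalar lemma: two level-one structures on the same system give the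
same type and parameter. -/
lemma key (hdim : Module.finrank ℂ H = 2) (e f p r : H)
    (hee : (inner ℂ e e : ℂ) = 1) (hff : (inner ℂ f f : ℂ) = 1) (hef : (inner ℂ e f : ℂ) = 0)
    (hpp : (inner ℂ p p : ℂ) = 1) (hrr : (inner ℂ r r : ℂ) = 1) (hpr : (inner ℂ p r : ℂ) = 0)
    (bt bt' : BType) (hbt : Adm bt) (hbt' : Adm bt')
    (α β α' β' : ℂ) (hdet : α * β' - α' * β ≠ 0)
    (h1 : (gpair bt p r).1 = α • (gpair bt' e f).1 + β • (gpair bt' e f).2)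
    (h2 : (gpair bt p r).2 = α' • (gpair bt' e f).1 + β' • (gpair bt' e f).2) :
    bt = bt' := by
  have hfe : (inner ℂ f e : ℂ) = 0 := by rw [← inner_conj_symm, hef, map_zero]
  have hrp : (inner ℂ r p : ℂ) = 0 := by rw [← inner_conj_symm, hpr, map_zero]
  have hc1 := congrArg (comps e f) h1
  have hc2 := congrArg (comps e f) h2
  rw [comps_add_smul, comps_gpair1 e f p r hee hff hef hfe bt,
    comps_gpair1 e f e f hee hff hef hfe bt', comps_gpair2 e f e f hee hff hef hfe bt',
    hee, hef, hfe, hff] at hc1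
  rw [comps_add_smul, comps_gpair2 e f p r hee hff hef hfe bt,
    comps_gpair1 e f e f hee hff hef hfe bt', comps_gpair2 e f e f hee hff hef hfe bt',
    hee, hef, hfe, hff] at hc2
  have hexp := expand_onb hdim hee hff hef
  have n1 : conj (inner ℂ e p : ℂ) * inner ℂ e p + conj (inner ℂ f p : ℂ) * inner ℂ f p = 1 := by
    have h := congrArg (fun z => (inner ℂ z p : ℂ)) (hexp p)
    simp only [inner_add_left, inner_smul_left, hpp] at h
    linear_combination -h
  have n2 : conj (inner ℂ e r : ℂ) * inner ℂ e r + conj (inner ℂ f r : ℂ) * inner ℂ f r = 1 := by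
    have h := congrArg (fun z => (inner ℂ z r : ℂ)) (hexp r)
    simp only [inner_add_left, inner_smul_left, hrr] at h
    linear_combination -h
  have o1 : conj (inner ℂ e p : ℂ) * inner ℂ e r + conj (inner ℂ f p : ℂ) * inner ℂ f r = 0 := by
    have h := congrArg (fun z => (inner ℂ z r : ℂ)) (hexp p)
    simp only [inner_add_left, inner_smul_left, hpr] at h
    linear_combination -h
  have o2 : conj (inner ℂ e r : ℂ) * inner ℂ e p + conj (inner ℂ f r : ℂ) * inner ℂ f p = 0 := by
    have h := congrArg (fun z => (inner ℂ z p : ℂ)) (hexp r)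
    simp only [inner_add_left, inner_smul_left, hrp] at h
    linear_combination -h
  exact key_tuples bt bt' hbt hbt' _ _ _ _ α β α' β' n1 n2 o1 o2 hdet hc1 hc2

lemma map_gpair1 {H H' : Type*} [NormedAddCommGroup H] [InnerProductSpace ℂ H]
    [NormedAddCommGroup H'] [InnerProductSpace ℂ H'] (θ : H ≃ₗᵢ[ℂ] H') (bt : BType) (e f : H) :
    TensorProduct.map θ.toLinearEquiv.toLinearMap θ.toLinearEquiv.toLinearMap (gpair bt e f).1
      = (gpair bt (θ e) (θ f)).1 := by
  cases bt <;>
    simp [gpair, wvec, TensorProduct.map_tmul, map_add, map_smul]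

lemma map_gpair2 {H H' : Type*} [NormedAddCommGroup H] [InnerProductSpace ℂ H]
    [NormedAddCommGroup H'] [InnerProductSpace ℂ H'] (θ : H ≃ₗᵢ[ℂ] H') (bt : BType) (e f : H) :
    TensorProduct.map θ.toLinearEquiv.toLinearMap θ.toLinearEquiv.toLinearMap (gpair bt e f).2
      = (gpair bt (θ e) (θ f)).2 := by
  cases bt <;>
    simp [gpair, wvec, TensorProduct.map_tmul, map_add, map_smul]

/-- Normalized level-one data of a basis of any given type. -/
lemma side_data {E : ℕ+ → Type*} [∀ t, NormedAddCommGroup (E t)]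
    [∀ t, InnerProductSpace ℂ (E t)]
    (β : ∀ s t : ℕ+, E (s + t) →ₗᵢ[ℂ] (E s ⊗[ℂ] E t))
    (bt : BType) (x y : ∀ t : ℕ+, E t) (h : IsBasisOfType E β bt x y) :
    ∃ e f : E 1, (inner ℂ e e : ℂ) = 1 ∧ (inner ℂ f f : ℂ) = 1 ∧ (inner ℂ e f : ℂ) = 0 ∧
      β 1 1 (x (1+1)) = (gpair bt e f).1 ∧ β 1 1 (y (1+1)) = (gpair bt e f).2 ∧
      Adm bt ∧
      (inner ℂ (x (1+1)) (x (1+1)) : ℂ) * inner ℂ (y (1+1)) (y (1+1))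
        - (inner ℂ (x (1+1)) (y (1+1)) : ℂ) * inner ℂ (y (1+1)) (x (1+1)) ≠ 0 := by
  have hcoe1 : ((1 : ℕ+) : ℕ) = 1 := rfl
  have hcoe2 : ((1+1 : ℕ+) : ℕ) = 2 := rfl
  cases bt with
  | e1 a =>
    obtain ⟨ha0, ha1, hx1, hy1, hip, hbx, hby⟩ := h
    have hc : cc a ≠ 0 := cc_ne_zero ha0 ha1
    have hc2 : cc a * cc a = 1 - (a:ℂ) * a := cc_mul_self ha0 ha1
    have hxx : ∀ t, (inner ℂ (x t) (x t) : ℂ) = 1 := fun t => by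
      rw [inner_self_eq_norm_sq_to_K, hx1 t]; norm_num
    have hyy : ∀ t, (inner ℂ (y t) (y t) : ℂ) = 1 := fun t => by
      rw [inner_self_eq_norm_sq_to_K, hy1 t]; norm_num
    have hxy1 : (inner ℂ (x 1) (y 1) : ℂ) = (a : ℂ) := by
      rw [hip 1, hcoe1, pow_one]
    have hyx1 : (inner ℂ (y 1) (x 1) : ℂ) = (a : ℂ) := by
      rw [← inner_conj_symm, hxy1, Complex.conj_ofReal]
    refine ⟨x 1, (cc a)⁻¹ • (y 1 - (a:ℂ) • x 1), hxx 1, ?_, ?_, ?_, ?_, ⟨ha0, ha1⟩, ?_⟩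
    · simp only [inner_smul_left, inner_smul_right, inner_sub_left, inner_sub_right,
        hxx, hyy, hxy1, hyx1, Complex.conj_ofReal, map_inv₀, conj_cc]
      field_simp
      linear_combination -hc2
    · simp only [inner_smul_right, inner_sub_right, hxx, hxy1]
      ring
    · simpa [gpair] using hbx 1 1
    · have hwv : wvec a (x 1) ((cc a)⁻¹ • (y 1 - (a:ℂ) • x 1)) = y 1 := by
        rw [wvec, smul_smul, mul_inv_cancel₀ hc, one_smul]
        abel
      simp only [gpair, hwv]
      exact hby 1 1
    · rw [hxx _, hyy _, hip _, ← inner_conj_symm, hip _]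
      rw [hcoe2]
      simp only [map_pow, Complex.conj_ofReal, one_mul, mul_one]
      intro hcon
      have hr : (1 : ℝ) - a^2*a^2 = 0 := by exact_mod_cast hcon
      have ha2 : a^2 < 1 := by nlinarith
      nlinarith [sq_nonneg a]
  | e2 a =>
    obtain ⟨ha0, ha1, hx1, hy1, hip, hbxe, hbxo, hbye, hbyo⟩ := h
    have hc : cc a ≠ 0 := cc_ne_zero ha0 ha1
    have hc2 : cc a * cc a = 1 - (a:ℂ) * a := cc_mul_self ha0 ha1
    have hxx : ∀ t, (inner ℂ (x t) (x t) : ℂ) = 1 := fun t => by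
      rw [inner_self_eq_norm_sq_to_K, hx1 t]; norm_num
    have hyy : ∀ t, (inner ℂ (y t) (y t) : ℂ) = 1 := fun t => by
      rw [inner_self_eq_norm_sq_to_K, hy1 t]; norm_num
    have hxy1 : (inner ℂ (x 1) (y 1) : ℂ) = (a : ℂ) := by
      rw [hip 1, hcoe1, pow_one]
    have hyx1 : (inner ℂ (y 1) (x 1) : ℂ) = (a : ℂ) := by
      rw [← inner_conj_symm, hxy1, Complex.conj_ofReal]
    have hodd : ¬ Even ((1 : ℕ+) : ℕ) := by rw [hcoe1]; decide
    have hwv : wvec a (x 1) ((cc a)⁻¹ • (y 1 - (a:ℂ) • x 1)) = y 1 := by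
      rw [wvec, smul_smul, mul_inv_cancel₀ hc, one_smul]
      abel
    refine ⟨x 1, (cc a)⁻¹ • (y 1 - (a:ℂ) • x 1), hxx 1, ?_, ?_, ?_, ?_, ⟨ha0, ha1⟩, ?_⟩
    · simp only [inner_smul_left, inner_smul_right, inner_sub_left, inner_sub_right,
        hxx, hyy, hxy1, hyx1, Complex.conj_ofReal, map_inv₀, conj_cc]
      field_simp
      linear_combination -hc2
    · simp only [inner_smul_right, inner_sub_right, hxx, hxy1]
      ring
    · simp only [gpair, hwv]
      exact hbxo 1 1 hodd
    · simp only [gpair, hwv]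
      exact hbyo 1 1 hodd
    · rw [hxx _, hyy _, hip _, ← inner_conj_symm, hip _]
      rw [hcoe2]
      simp only [map_pow, Complex.conj_ofReal, one_mul, mul_one]
      intro hcon
      have hr : (1 : ℝ) - a^2*a^2 = 0 := by exact_mod_cast hcon
      have ha2 : a^2 < 1 := by nlinarith
      nlinarith [sq_nonneg a]
  | e3 l =>
    obtain ⟨hl, hx1, hy2, hip, hbx, hby⟩ := h
    have hxx : ∀ t, (inner ℂ (x t) (x t) : ℂ) = 1 := fun t => by
      rw [inner_self_eq_norm_sq_to_K, hx1 t]; norm_num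
    have hyyt : ∀ t : ℕ+, (inner ℂ (y t) (y t) : ℂ)
        = ((∑ k ∈ Finset.range (t : ℕ), ‖l‖ ^ (2*k) : ℝ) : ℂ) := fun t => by
      rw [inner_self_eq_norm_sq_to_K, ← RCLike.ofReal_pow, hy2 t]
      norm_cast
    have hyy1 : (inner ℂ (y 1) (y 1) : ℂ) = 1 := by
      rw [hyyt 1, hcoe1]
      norm_num
    refine ⟨x 1, y 1, hxx 1, hyy1, hip 1, ?_, ?_, hl, ?_⟩
    · simpa [gpair] using hbx 1 1
    · have := hby 1 1
      rw [hcoe1, pow_one] at this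
      simpa [gpair] using this
    · rw [hxx _, hyyt _, hip _, ← inner_conj_symm, hip _]
      rw [hcoe2]
      simp only [map_zero, mul_zero, sub_zero, one_mul, ne_eq, Complex.ofReal_eq_zero]
      have hpos : (0:ℝ) < ∑ k ∈ Finset.range 2, ‖l‖ ^ (2*k) := by
        rw [Finset.sum_range_succ, Finset.sum_range_one]
        norm_num
        positivity
      exact ne_of_gt hpos
  | e4 =>
    obtain ⟨hx1, hy1, hip, hbx, hby⟩ := h
    have hxx : ∀ t, (inner ℂ (x t) (x t) : ℂ) = 1 := fun t => by
      rw [inner_self_eq_norm_sq_to_K, hx1 t]; norm_num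
    have hyy : ∀ t, (inner ℂ (y t) (y t) : ℂ) = 1 := fun t => by
      rw [inner_self_eq_norm_sq_to_K, hy1 t]; norm_num
    refine ⟨x 1, y 1, hxx 1, hyy 1, hip 1, ?_, ?_, trivial, ?_⟩
    · simpa [gpair] using hbx 1 1
    · simpa [gpair] using hby 1 1
    · rw [hxx _, hyy _, hip _]
      norm_num
  | e5 =>
    obtain ⟨hx1, hy1, hip, hbx, hby⟩ := h
    have hxx : ∀ t, (inner ℂ (x t) (x t) : ℂ) = 1 := fun t => by
      rw [inner_self_eq_norm_sq_to_K, hx1 t]; norm_num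
    have hyy : ∀ t, (inner ℂ (y t) (y t) : ℂ) = 1 := fun t => by
      rw [inner_self_eq_norm_sq_to_K, hy1 t]; norm_num
    refine ⟨x 1, y 1, hxx 1, hyy 1, hip 1, ?_, ?_, trivial, ?_⟩
    · simpa [gpair] using hbx 1 1
    · simpa [gpair] using hby 1 1
    · rw [hxx _, hyy _, hip _]
      norm_num

end Aux


/-- **Lemma 1.4.** Isomorphic subproduct systems have bases of the same type, with
the same parameter. -/
theorem statement1
    (E : ℕ+ → Type*) [∀ t, NormedAddCommGroup (E t)] [∀ t, InnerProductSpace ℂ (E t)]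
    (hdim : ∀ t, Module.finrank ℂ (E t) = 2)
    (β : ∀ s t : ℕ+, E (s + t) →ₗᵢ[ℂ] (E s ⊗[ℂ] E t))
    (hassoc : SubprodAssoc E β)
    (F : ℕ+ → Type*) [∀ t, NormedAddCommGroup (F t)] [∀ t, InnerProductSpace ℂ (F t)]
    (hdimF : ∀ t, Module.finrank ℂ (F t) = 2)
    (γ : ∀ s t : ℕ+, F (s + t) →ₗᵢ[ℂ] (F s ⊗[ℂ] F t))
    (hassocF : SubprodAssoc F γ)
    (x y : ∀ t : ℕ+, E t) (u v : ∀ t : ℕ+, F t) (bt bt' : BType)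
    (hxy : IsBasisOfType E β bt x y) (huv : IsBasisOfType F γ bt' u v)
    (θ : ∀ t : ℕ+, E t ≃ₗᵢ[ℂ] F t) (hθ : Intertwines E F β γ θ) :
    bt = bt' := by
  obtain ⟨e', f', he'e', hf'f', he'f', hbx, hby, hadm, hgramE⟩ := side_data β bt x y hxy
  obtain ⟨e, f, hee, hff, hef, hbu, hbv, hadm', hgramF⟩ := side_data γ bt' u v huv
  have hindF : LinearIndependent ℂ ![u (1+1), v (1+1)] := indep_pair_of_gram hgramF
  obtain ⟨α, β₀, hxc⟩ := exists_coords (hdimF (1+1)) hindF (θ (1+1) (x (1+1)))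
  obtain ⟨α', β₀', hyc⟩ := exists_coords (hdimF (1+1)) hindF (θ (1+1) (y (1+1)))
  have hθind : LinearIndependent ℂ ![θ (1+1) (x (1+1)), θ (1+1) (y (1+1))] := by
    refine indep_pair_of_gram ?_
    simp only [LinearIsometryEquiv.inner_map_map]
    exact hgramE
  have hdet : α * β₀' - α' * β₀ ≠ 0 := det_ne_zero_of_indep hxc hyc hθind
  have h1 : (gpair bt (θ 1 e') (θ 1 f')).1
      = α • (gpair bt' e f).1 + β₀ • (gpair bt' e f).2 := by
    calc (gpair bt (θ 1 e') (θ 1 f')).1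
        = TensorProduct.map (θ 1).toLinearEquiv.toLinearMap (θ 1).toLinearEquiv.toLinearMap
            (gpair bt e' f').1 := (map_gpair1 (θ 1) bt e' f').symm
      _ = TensorProduct.map (θ 1).toLinearEquiv.toLinearMap (θ 1).toLinearEquiv.toLinearMap
            (β 1 1 (x (1+1))) := by rw [hbx]
      _ = γ 1 1 (θ (1+1) (x (1+1))) := (hθ 1 1 (x (1+1))).symm
      _ = γ 1 1 (α • u (1+1) + β₀ • v (1+1)) := by rw [← hxc]
      _ = α • γ 1 1 (u (1+1)) + β₀ • γ 1 1 (v (1+1)) := by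
            rw [map_add, LinearIsometry.map_smul, LinearIsometry.map_smul]
      _ = α • (gpair bt' e f).1 + β₀ • (gpair bt' e f).2 := by rw [hbu, hbv]
  have h2 : (gpair bt (θ 1 e') (θ 1 f')).2
      = α' • (gpair bt' e f).1 + β₀' • (gpair bt' e f).2 := by
    calc (gpair bt (θ 1 e') (θ 1 f')).2
        = TensorProduct.map (θ 1).toLinearEquiv.toLinearMap (θ 1).toLinearEquiv.toLinearMap
            (gpair bt e' f').2 := (map_gpair2 (θ 1) bt e' f').symm
      _ = TensorProduct.map (θ 1).toLinearEquiv.toLinearMap (θ 1).toLinearEquiv.toLinearMap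
            (β 1 1 (y (1+1))) := by rw [hby]
      _ = γ 1 1 (θ (1+1) (y (1+1))) := (hθ 1 1 (y (1+1))).symm
      _ = γ 1 1 (α' • u (1+1) + β₀' • v (1+1)) := by rw [← hyc]
      _ = α' • γ 1 1 (u (1+1)) + β₀' • γ 1 1 (v (1+1)) := by
            rw [map_add, LinearIsometry.map_smul, LinearIsometry.map_smul]
      _ = α' • (gpair bt' e f).1 + β₀' • (gpair bt' e f).2 := by rw [hbu, hbv]
  exact key (hdimF 1) e f (θ 1 e') (θ 1 f') hee hff hef
    (by rw [LinearIsometryEquiv.inner_map_map]; exact he'e')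
    (by rw [LinearIsometryEquiv.inner_map_map]; exact hf'f')
    (by rw [LinearIsometryEquiv.inner_map_map]; exact he'f')
    bt bt' hadm hadm' α β₀ α' β₀' hdet h1 h2


end SubprodHilbert
end
end

section
/- Let (E_t, β_{s,t}) and (F_t, γ_{s,t}) be subproduct systems of two-dimensional Hilbert spaces possessing bases of the same type with the same parameter (both of type E_1(a), or both of type E_2(a), or both of type E_3(λ), or both of type E_4, or both of type E_5). Then (E_t,β) and (F_t,γ) are isomorphic; indeed there is an isomorphism (θ_t)_t carrying the chosen basis of (E_t,β) to the chosen basis of (F_t,γ). -/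
noncomputable section

open scoped TensorProduct ComplexConjugate

namespace SubprodHilbert

section TensorConstruction


variable {E F : Type*} [NormedAddCommGroup E] [InnerProductSpace ℂ E]
  [NormedAddCommGroup F] [InnerProductSpace ℂ F]

local notation "⟪" x ", " y "⟫" => @inner ℂ _ _ x y

end TensorConstruction


section Aux

variable {E F : Type*} [NormedAddCommGroup E] [InnerProductSpace ℂ E]
  [NormedAddCommGroup F] [InnerProductSpace ℂ F]

local notation "⟪" x ", " y "⟫" => @inner ℂ _ _ x y


lemma pair_indep {x y : E} (h : ‖(⟪x, y⟫ : ℂ)‖ < ‖x‖ * ‖y‖) :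
    LinearIndependent ℂ ![x, y] := by
  rw [LinearIndependent.pair_iff]
  intro s t hst
  have h1 : s * ((‖x‖ : ℂ)) ^ 2 + t * ⟪x, y⟫ = 0 := by
    have := congrArg (fun w => (⟪x, w⟫ : ℂ)) hst
    simpa [inner_add_right, inner_smul_right, mul_comm,
      inner_self_eq_norm_sq_to_K] using this
  have h2 : s * conj ⟪x, y⟫ + t * ((‖y‖ : ℂ)) ^ 2 = 0 := by
    have h2' : s * ⟪y, x⟫ + t * ((‖y‖ : ℂ)) ^ 2 = 0 := by
      have := congrArg (fun w => (⟪y, w⟫ : ℂ)) hst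
      simpa [inner_add_right, inner_smul_right, mul_comm,
        inner_self_eq_norm_sq_to_K] using this
    have hyx : ⟪y, x⟫ = conj ⟪x, y⟫ := by rw [← inner_conj_symm x y, Complex.conj_conj]
    rwa [hyx] at h2'
  have hdet : ((‖x‖ : ℂ) ^ 2 * (‖y‖ : ℂ) ^ 2 - (‖(⟪x, y⟫ : ℂ)‖ : ℂ) ^ 2) ≠ 0 := by
    have : ((‖x‖ ^ 2 * ‖y‖ ^ 2 - ‖(⟪x, y⟫ : ℂ)‖ ^ 2 : ℝ) : ℂ) ≠ 0 := by
      rw [Ne, Complex.ofReal_eq_zero]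
      have h0 : (0:ℝ) ≤ ‖(⟪x, y⟫ : ℂ)‖ := norm_nonneg _
      nlinarith [norm_nonneg x, norm_nonneg y]
    push_cast at this; exact this
  have hCC : ⟪x, y⟫ * conj ⟪x, y⟫ = ((‖(⟪x, y⟫ : ℂ)‖ : ℂ)) ^ 2 := by
    rw [Complex.mul_conj]; norm_cast
    rw [Complex.normSq_eq_norm_sq]
  have hs : s * ((‖x‖ : ℂ) ^ 2 * (‖y‖ : ℂ) ^ 2 - (‖(⟪x, y⟫ : ℂ)‖ : ℂ) ^ 2) = 0 := by
    linear_combination ((‖y‖:ℂ) ^ 2) * h1 - ⟪x, y⟫ * h2 + s * hCC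
  have hs0 : s = 0 := by
    rcases mul_eq_zero.mp hs with h' | h'
    · exact h'
    · exact absurd h' hdet
  refine ⟨hs0, ?_⟩
  have hy : ‖y‖ ≠ 0 := by
    intro h0
    rw [h0, mul_zero] at h
    exact absurd h (not_lt.mpr (norm_nonneg _))
  rw [hs0, zero_mul, zero_add] at h2
  rcases mul_eq_zero.mp h2 with h' | h'
  · exact h'
  · exact absurd h' (pow_ne_zero 2 (by exact_mod_cast hy))

lemma exists_isometry (hE : Module.finrank ℂ E = 2) (hF : Module.finrank ℂ F = 2)
    {x y : E} {u v : F} (hind : LinearIndependent ℂ ![x, y])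
    (hindF : LinearIndependent ℂ ![u, v])
    (hxx : (⟪x, x⟫ : ℂ) = ⟪u, u⟫) (hxy : (⟪x, y⟫ : ℂ) = ⟪u, v⟫)
    (hyy : (⟪y, y⟫ : ℂ) = ⟪v, v⟫) :
    ∃ θ : E ≃ₗᵢ[ℂ] F, θ x = u ∧ θ y = v := by
  let bE : Module.Basis (Fin 2) ℂ E := basisOfLinearIndependentOfCardEqFinrank hind (by simp [hE])
  let bF : Module.Basis (Fin 2) ℂ F := basisOfLinearIndependentOfCardEqFinrank hindF (by simp [hF])
  have hbE : ∀ i, bE i = ![x, y] i := fun i => by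
    rw [show (bE : Fin 2 → E) = ![x, y] from coe_basisOfLinearIndependentOfCardEqFinrank _ _]
  have hbF : ∀ i, bF i = ![u, v] i := fun i => by
    rw [show (bF : Fin 2 → F) = ![u, v] from coe_basisOfLinearIndependentOfCardEqFinrank _ _]
  let θ₀ : E ≃ₗ[ℂ] F := bE.equiv bF (Equiv.refl _)
  have hθb : ∀ i, θ₀ (bE i) = bF i := fun i => bE.equiv_apply _ bF _
  have key : ∀ i j, (⟪bF i, bF j⟫ : ℂ) = ⟪bE i, bE j⟫ := by
    intro i j
    have hyx : (⟪y, x⟫ : ℂ) = ⟪v, u⟫ := by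
      rw [← inner_conj_symm y x, ← inner_conj_symm v u, hxy]
    fin_cases i <;> fin_cases j <;>
      simp only [hbE, hbF, Matrix.cons_val_zero, Matrix.cons_val_one, Matrix.head_cons] <;>
      [exact hxx.symm; exact hxy.symm; exact hyx.symm; exact hyy.symm]
  have hmet : ∀ w w' : E, (⟪θ₀ w, θ₀ w'⟫ : ℂ) = ⟪w, w'⟫ := by
    intro w w'
    rw [← bE.sum_repr w, ← bE.sum_repr w']
    simp only [map_sum, LinearEquiv.map_smul, inner_sum, sum_inner, inner_smul_left,
      inner_smul_right, hθb, key]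
  refine ⟨θ₀.isometryOfInner hmet, ?_, ?_⟩
  · have := hθb 0
    simp only [hbE, hbF, Matrix.cons_val_zero] at this
    exact this
  · have := hθb 1
    simp only [hbE, hbF, Matrix.cons_val_one, Matrix.head_cons] at this
    exact this

lemma inner_self_congr {x : E} {u : F} (h : ‖x‖ = ‖u‖) : (⟪x, x⟫ : ℂ) = ⟪u, u⟫ := by
  rw [inner_self_eq_norm_sq_to_K, inner_self_eq_norm_sq_to_K, h]

end Aux

section Build

variable {E F : ℕ+ → Type*}
  [∀ t, NormedAddCommGroup (E t)] [∀ t, InnerProductSpace ℂ (E t)]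
  [∀ t, NormedAddCommGroup (F t)] [∀ t, InnerProductSpace ℂ (F t)]
variable {β : ∀ s t : ℕ+, E (s + t) →ₗᵢ[ℂ] (E s ⊗[ℂ] E t)}
variable {γ : ∀ s t : ℕ+, F (s + t) →ₗᵢ[ℂ] (F s ⊗[ℂ] F t)}

local notation "⟪" x ", " y "⟫" => @inner ℂ _ _ x y

lemma build (hdim : ∀ t, Module.finrank ℂ (E t) = 2)
    (hdimF : ∀ t, Module.finrank ℂ (F t) = 2)
    {x y : ∀ t : ℕ+, E t} {u v : ∀ t : ℕ+, F t}
    (hindE : ∀ t, LinearIndependent ℂ ![x t, y t])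
    (hindF : ∀ t, LinearIndependent ℂ ![u t, v t])
    (hxx : ∀ t, (⟪x t, x t⟫ : ℂ) = ⟪u t, u t⟫)
    (hxy : ∀ t, (⟪x t, y t⟫ : ℂ) = ⟪u t, v t⟫)
    (hyy : ∀ t, (⟪y t, y t⟫ : ℂ) = ⟪v t, v t⟫)
    (hrel : ∀ (θ : ∀ t : ℕ+, E t ≃ₗᵢ[ℂ] F t),
      (∀ t, θ t (x t) = u t ∧ θ t (y t) = v t) → ∀ s t : ℕ+,
      γ s t (θ (s + t) (x (s + t))) =
        TensorProduct.map (θ s).toLinearEquiv.toLinearMap (θ t).toLinearEquiv.toLinearMap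
          (β s t (x (s + t)))
      ∧ γ s t (θ (s + t) (y (s + t))) =
        TensorProduct.map (θ s).toLinearEquiv.toLinearMap (θ t).toLinearEquiv.toLinearMap
          (β s t (y (s + t)))) :
    ∃ θ : ∀ t : ℕ+, E t ≃ₗᵢ[ℂ] F t, Intertwines E F β γ θ ∧
      ∀ t : ℕ+, θ t (x t) = u t ∧ θ t (y t) = v t := by
  choose θ hθ1 hθ2 using fun t =>
    exists_isometry (hdim t) (hdimF t) (hindE t) (hindF t) (hxx t) (hxy t) (hyy t)
  have hθ : ∀ t, θ t (x t) = u t ∧ θ t (y t) = v t := fun t => ⟨hθ1 t, hθ2 t⟩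
  refine ⟨θ, ?_, hθ⟩
  intro s t w
  let bE : Module.Basis (Fin 2) ℂ (E (s + t)) :=
    basisOfLinearIndependentOfCardEqFinrank (hindE (s + t)) (by simp [hdim])
  have hbE : ∀ i, bE i = ![x (s + t), y (s + t)] i := fun i => by
    rw [show (bE : Fin 2 → E (s + t)) = ![x (s + t), y (s + t)] from
      coe_basisOfLinearIndependentOfCardEqFinrank _ _]
  let L1 : E (s + t) →ₗ[ℂ] (F s ⊗[ℂ] F t) :=
    (γ s t).toLinearMap ∘ₗ (θ (s + t)).toLinearEquiv.toLinearMap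
  let L2 : E (s + t) →ₗ[ℂ] (F s ⊗[ℂ] F t) :=
    (TensorProduct.map (θ s).toLinearEquiv.toLinearMap (θ t).toLinearEquiv.toLinearMap) ∘ₗ
      (β s t).toLinearMap
  have hL : L1 = L2 := by
    apply bE.ext
    intro i
    fin_cases i
    · have h0 := hbE 0
      simp only [Matrix.cons_val_zero] at h0
      simpa [L1, L2, h0] using (hrel θ hθ s t).1
    · have h1 := hbE 1
      simp only [Matrix.cons_val_one, Matrix.head_cons] at h1
      simpa [L1, L2, h1] using (hrel θ hθ s t).2
  simpa [L1, L2] using LinearMap.congr_fun hL w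

end Build

/-- Two subproduct systems possessing bases of the same type (with the same parameter) are
isomorphic, by an isomorphism carrying the one basis to the other. -/
theorem statement2
    (E : ℕ+ → Type*) [∀ t, NormedAddCommGroup (E t)] [∀ t, InnerProductSpace ℂ (E t)]
    (hdim : ∀ t, Module.finrank ℂ (E t) = 2)
    (β : ∀ s t : ℕ+, E (s + t) →ₗᵢ[ℂ] (E s ⊗[ℂ] E t))
    (hassoc : SubprodAssoc E β)
    (F : ℕ+ → Type*) [∀ t, NormedAddCommGroup (F t)] [∀ t, InnerProductSpace ℂ (F t)]
    (hdimF : ∀ t, Module.finrank ℂ (F t) = 2)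
    (γ : ∀ s t : ℕ+, F (s + t) →ₗᵢ[ℂ] (F s ⊗[ℂ] F t))
    (hassocF : SubprodAssoc F γ)
    (x y : ∀ t : ℕ+, E t) (u v : ∀ t : ℕ+, F t) (bt : BType)
    (hxy : IsBasisOfType E β bt x y) (huv : IsBasisOfType F γ bt u v) :
    ∃ θ : ∀ t : ℕ+, E t ≃ₗᵢ[ℂ] F t, Intertwines E F β γ θ ∧
      ∀ t : ℕ+, θ t (x t) = u t ∧ θ t (y t) = v t := by
  cases bt with
  | e1 a =>
    obtain ⟨ha0, ha1, hnx, hny, hin, hβx, hβy⟩ := hxy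
    obtain ⟨-, -, hnu, hnv, hinF, hγx, hγy⟩ := huv
    have hlt : ∀ t : ℕ+, ‖((a : ℂ) ^ (t : ℕ))‖ < 1 := by
      intro t
      rw [norm_pow, Complex.norm_real, Real.norm_of_nonneg ha0]
      exact pow_lt_one₀ ha0 ha1 t.pos.ne'
    refine build hdim hdimF
      (fun t => pair_indep (by rw [hin t, hnx t, hny t, mul_one]; exact hlt t))
      (fun t => pair_indep (by rw [hinF t, hnu t, hnv t, mul_one]; exact hlt t))
      (fun t => inner_self_congr (by rw [hnx t, hnu t]))
      (fun t => by rw [hin t, hinF t])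
      (fun t => inner_self_congr (by rw [hny t, hnv t])) ?_
    intro θ hθ s t
    constructor
    · rw [(hθ (s + t)).1, hγx s t, hβx s t, TensorProduct.map_tmul]
      simp [(hθ s).1, (hθ t).1]
    · rw [(hθ (s + t)).2, hγy s t, hβy s t, TensorProduct.map_tmul]
      simp [(hθ s).2, (hθ t).2]
  | e2 a =>
    obtain ⟨ha0, ha1, hnx, hny, hin, hβxe, hβxo, hβye, hβyo⟩ := hxy
    obtain ⟨-, -, hnu, hnv, hinF, hγxe, hγxo, hγye, hγyo⟩ := huv
    have hlt : ∀ t : ℕ+, ‖((a : ℂ) ^ (t : ℕ))‖ < 1 := by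
      intro t
      rw [norm_pow, Complex.norm_real, Real.norm_of_nonneg ha0]
      exact pow_lt_one₀ ha0 ha1 t.pos.ne'
    refine build hdim hdimF
      (fun t => pair_indep (by rw [hin t, hnx t, hny t, mul_one]; exact hlt t))
      (fun t => pair_indep (by rw [hinF t, hnu t, hnv t, mul_one]; exact hlt t))
      (fun t => inner_self_congr (by rw [hnx t, hnu t]))
      (fun t => by rw [hin t, hinF t])
      (fun t => inner_self_congr (by rw [hny t, hnv t])) ?_
    intro θ hθ s t
    by_cases hpar : Even (s : ℕ)
    · constructor
      · rw [(hθ (s + t)).1, hγxe s t hpar, hβxe s t hpar, TensorProduct.map_tmul]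
        simp [(hθ s).1, (hθ t).1]
      · rw [(hθ (s + t)).2, hγye s t hpar, hβye s t hpar, TensorProduct.map_tmul]
        simp [(hθ s).2, (hθ t).2]
    · constructor
      · rw [(hθ (s + t)).1, hγxo s t hpar, hβxo s t hpar, TensorProduct.map_tmul]
        simp [(hθ s).1, (hθ t).2]
      · rw [(hθ (s + t)).2, hγyo s t hpar, hβyo s t hpar, TensorProduct.map_tmul]
        simp [(hθ s).2, (hθ t).1]
  | e3 l =>
    obtain ⟨hl, hnx, hny, hin, hβx, hβy⟩ := hxy
    obtain ⟨-, hnu, hnv, hinF, hγx, hγy⟩ := huv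
    have hsum : ∀ t : ℕ+,
        (1 : ℝ) ≤ ∑ k ∈ Finset.range (t : ℕ), ‖l‖ ^ (2 * k) := by
      intro t
      have := Finset.single_le_sum (f := fun k => ‖l‖ ^ (2 * k))
        (fun k _ => pow_nonneg (norm_nonneg l) _) (Finset.mem_range.mpr t.pos)
      simpa using this
    have hypos : ∀ t : ℕ+, 0 < ‖y t‖ := by
      intro t
      have h1 := hny t
      nlinarith [norm_nonneg (y t), hsum t]
    have hvpos : ∀ t : ℕ+, 0 < ‖v t‖ := by
      intro t
      have h1 := hnv t
      nlinarith [norm_nonneg (v t), hsum t]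
    refine build hdim hdimF
      (fun t => pair_indep (by
        rw [hin t, norm_zero, hnx t, one_mul]; exact hypos t))
      (fun t => pair_indep (by
        rw [hinF t, norm_zero, hnu t, one_mul]; exact hvpos t))
      (fun t => inner_self_congr (by rw [hnx t, hnu t]))
      (fun t => by rw [hin t, hinF t])
      (fun t => inner_self_congr (by
        rw [← Real.sqrt_sq (norm_nonneg (y t)), ← Real.sqrt_sq (norm_nonneg (v t)),
          hny t, hnv t])) ?_
    intro θ hθ s t
    constructor
    · rw [(hθ (s + t)).1, hγx s t, hβx s t, TensorProduct.map_tmul]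
      simp [(hθ s).1, (hθ t).1]
    · rw [(hθ (s + t)).2, hγy s t, hβy s t, map_add, LinearMap.map_smul,
        TensorProduct.map_tmul, TensorProduct.map_tmul]
      simp [(hθ s).1, (hθ t).1, (hθ s).2, (hθ t).2]
  | e4 =>
    obtain ⟨hnx, hny, hin, hβx, hβy⟩ := hxy
    obtain ⟨hnu, hnv, hinF, hγx, hγy⟩ := huv
    refine build hdim hdimF
      (fun t => pair_indep (by rw [hin t, norm_zero, hnx t, hny t]; norm_num))
      (fun t => pair_indep (by rw [hinF t, norm_zero, hnu t, hnv t]; norm_num))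
      (fun t => inner_self_congr (by rw [hnx t, hnu t]))
      (fun t => by rw [hin t, hinF t])
      (fun t => inner_self_congr (by rw [hny t, hnv t])) ?_
    intro θ hθ s t
    constructor
    · rw [(hθ (s + t)).1, hγx s t, hβx s t, TensorProduct.map_tmul]
      simp [(hθ s).1, (hθ t).1]
    · rw [(hθ (s + t)).2, hγy s t, hβy s t, TensorProduct.map_tmul]
      simp [(hθ s).2, (hθ t).1]
  | e5 =>
    obtain ⟨hnx, hny, hin, hβx, hβy⟩ := hxy
    obtain ⟨hnu, hnv, hinF, hγx, hγy⟩ := huv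
    refine build hdim hdimF
      (fun t => pair_indep (by rw [hin t, norm_zero, hnx t, hny t]; norm_num))
      (fun t => pair_indep (by rw [hinF t, norm_zero, hnu t, hnv t]; norm_num))
      (fun t => inner_self_congr (by rw [hnx t, hnu t]))
      (fun t => by rw [hin t, hinF t])
      (fun t => inner_self_congr (by rw [hny t, hnv t])) ?_
    intro θ hθ s t
    constructor
    · rw [(hθ (s + t)).1, hγx s t, hβx s t, TensorProduct.map_tmul]
      simp [(hθ s).1, (hθ t).1]
    · rw [(hθ (s + t)).2, hγy s t, hβy s t, TensorProduct.map_tmul]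
      simp [(hθ s).1, (hθ t).2]


end SubprodHilbert
end
end

section
/- Let (E_t, β_{s,t}) be a subproduct system of two-dimensional Hilbert spaces with a basis (x_t,y_t)_t of type E_1(0) (i.e. with ⟨x_t,y_t⟩ = 0 for all t). Then every automorphism (θ_t)_t of (E_t,β) has one of the following two forms: there exist c,d ∈ ℝ such that θ_t x_t = e^{ict} x_t and θ_t y_t = e^{idt} y_t for all t, or there exist c,d ∈ ℝ such that θ_t x_t = e^{ict} y_t and θ_t y_t = e^{idt} x_t for all t. -/
noncomputable section

open scoped TensorProduct ComplexConjugate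

namespace SubprodHilbert

section TensorConstruction


variable {E F : Type*} [NormedAddCommGroup E] [InnerProductSpace ℂ E]
  [NormedAddCommGroup F] [InnerProductSpace ℂ F]

local notation "⟪" x ", " y "⟫" => @inner ℂ _ _ x y

end TensorConstruction


section AuxStatement4

local notation "⟪" x ", " y "⟫" => @inner ℂ _ _ x y

/-- Expansion of a vector in a two-dimensional space along an orthonormal pair. -/
lemma expand_two {G : Type*} [NormedAddCommGroup G] [InnerProductSpace ℂ G]
    (hdim : Module.finrank ℂ G = 2) {x y : G}
    (hx : ‖x‖ = 1) (hy : ‖y‖ = 1) (hxy : ⟪x, y⟫ = 0) (v : G) :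
    v = ⟪x, v⟫ • x + ⟪y, v⟫ • y := by
  have hyx : ⟪y, x⟫ = 0 := by rw [← inner_conj_symm, hxy, map_zero]
  have hon : Orthonormal ℂ ![x, y] := by
    constructor
    · intro i; fin_cases i <;> simpa
    · intro i j hij
      fin_cases i <;> fin_cases j <;> simp_all
  have hsp : ⊤ ≤ Submodule.span ℂ (Set.range ![x, y]) := by
    rw [← coe_basisOfOrthonormalOfCardEqFinrank hon
      (by simp [hdim] : Fintype.card (Fin 2) = Module.finrank ℂ G)]
    exact (basisOfOrthonormalOfCardEqFinrank hon _).span_eq.ge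
  let ob : OrthonormalBasis (Fin 2) ℂ G := OrthonormalBasis.mk hon hsp
  have h := ob.sum_repr' v
  rw [Fin.sum_univ_two] at h
  have hob : ∀ i, ob i = ![x, y] i := fun i => by simp [ob, OrthonormalBasis.coe_mk]
  rw [hob 0, hob 1] at h
  simpa using h.symm

/-- A multiplicative unimodular function on `ℕ+` is a character `t ↦ e^{ict}`. -/
lemma mult_exp (f : ℕ+ → ℂ) (hf : ∀ s t : ℕ+, f (s + t) = f s * f t)
    (habs : norm (f 1) = 1) :
    ∃ c : ℝ, ∀ t : ℕ+, f t = Complex.exp (Complex.I * (c : ℂ) * ((t : ℕ) : ℂ)) := by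
  have h1 : f 1 = Complex.exp (Complex.I * ((f 1).arg : ℂ)) := by
    conv_lhs => rw [← Complex.norm_mul_exp_arg_mul_I (f 1)]
    rw [habs, Complex.ofReal_one, one_mul, mul_comm]
  obtain ⟨c, hc⟩ : ∃ c : ℝ, f 1 = Complex.exp (Complex.I * (c : ℂ)) := ⟨_, h1⟩
  refine ⟨c, fun t => ?_⟩
  induction t using PNat.recOn with
  | one => simpa using hc
  | succ t ih =>
      rw [hf t 1, ih, hc, ← Complex.exp_add]
      congr 1
      push_cast
      ring

end AuxStatement4

/-- **Lemma 1.11, case `𝓔₁(0)`.** -/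
theorem statement4
    (E : ℕ+ → Type*) [∀ t, NormedAddCommGroup (E t)] [∀ t, InnerProductSpace ℂ (E t)]
    (hdim : ∀ t, Module.finrank ℂ (E t) = 2)
    (β : ∀ s t : ℕ+, E (s + t) →ₗᵢ[ℂ] (E s ⊗[ℂ] E t))
    (hassoc : SubprodAssoc E β)
    (x y : ∀ t : ℕ+, E t) (hxy : IsBasisE1 E β 0 x y)
    (θ : ∀ t : ℕ+, E t ≃ₗᵢ[ℂ] E t) (hθ : Intertwines E E β β θ) :
    (∃ c d : ℝ, ∀ t : ℕ+,
        θ t (x t) = Complex.exp (Complex.I * (c : ℂ) * ((t : ℕ) : ℂ)) • x t ∧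
        θ t (y t) = Complex.exp (Complex.I * (d : ℂ) * ((t : ℕ) : ℂ)) • y t) ∨
    (∃ c d : ℝ, ∀ t : ℕ+,
        θ t (x t) = Complex.exp (Complex.I * (c : ℂ) * ((t : ℕ) : ℂ)) • y t ∧
        θ t (y t) = Complex.exp (Complex.I * (d : ℂ) * ((t : ℕ) : ℂ)) • x t) := by
  obtain ⟨hnx, hny, hinn, hbx, hby⟩ := hxy
  have hinn0 : ∀ t : ℕ+, (inner ℂ (x t) (y t) : ℂ) = 0 := by
    intro t
    rw [hinn t]
    simp [t.pos.ne']
  have hinn0' : ∀ t : ℕ+, (inner ℂ (y t) (x t) : ℂ) = 0 := fun t => by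
    rw [← inner_conj_symm, hinn0 t, map_zero]
  have hxx : ∀ t : ℕ+, (inner ℂ (x t) (x t) : ℂ) = 1 := fun t => by
    rw [inner_self_eq_norm_sq_to_K, hnx]; norm_num
  have hyy : ∀ t : ℕ+, (inner ℂ (y t) (y t) : ℂ) = 1 := fun t => by
    rw [inner_self_eq_norm_sq_to_K, hny]; norm_num
  -- expansion of θ on the basis
  have hθx : ∀ t : ℕ+, θ t (x t) =
      (inner ℂ (x t) (θ t (x t)) : ℂ) • x t + (inner ℂ (y t) (θ t (x t)) : ℂ) • y t :=
    fun t => expand_two (hdim t) (hnx t) (hny t) (hinn0 t) _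
  have hθy : ∀ t : ℕ+, θ t (y t) =
      (inner ℂ (x t) (θ t (y t)) : ℂ) • x t + (inner ℂ (y t) (θ t (y t)) : ℂ) • y t :=
    fun t => expand_two (hdim t) (hnx t) (hny t) (hinn0 t) _
  -- the key tensor equations
  have keyx : ∀ s t : ℕ+,
      (inner ℂ (x (s+t)) (θ (s+t) (x (s+t))) : ℂ) • (x s ⊗ₜ[ℂ] x t)
        + (inner ℂ (y (s+t)) (θ (s+t) (x (s+t))) : ℂ) • (y s ⊗ₜ[ℂ] y t)
        = (θ s (x s)) ⊗ₜ[ℂ] (θ t (x t)) := by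
    intro s t
    have h := hθ s t (x (s + t))
    rw [hbx s t, TensorProduct.map_tmul] at h
    rw [hθx (s+t), map_add, LinearIsometry.map_smul, LinearIsometry.map_smul,
      hbx, hby] at h
    simpa using h
  have keyy : ∀ s t : ℕ+,
      (inner ℂ (x (s+t)) (θ (s+t) (y (s+t))) : ℂ) • (x s ⊗ₜ[ℂ] x t)
        + (inner ℂ (y (s+t)) (θ (s+t) (y (s+t))) : ℂ) • (y s ⊗ₜ[ℂ] y t)
        = (θ s (y s)) ⊗ₜ[ℂ] (θ t (y t)) := by
    intro s t
    have h := hθ s t (y (s + t))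
    rw [hby s t, TensorProduct.map_tmul] at h
    rw [hθy (s+t), map_add, LinearIsometry.map_smul, LinearIsometry.map_smul,
      hbx, hby] at h
    simpa using h
  -- coefficient equations
  have hAA : ∀ s t : ℕ+, (inner ℂ (x (s+t)) (θ (s+t) (x (s+t))) : ℂ)
      = inner ℂ (x s) (θ s (x s)) * inner ℂ (x t) (θ t (x t)) := by
    intro s t
    have h := congrArg (fun z => innerFunc (x s ⊗ₜ[ℂ] x t) z) (keyx s t)
    simpa [inner_add_right, inner_smul_right, hxx, hyy, hinn0, hinn0', hnx, hny] using h
  have hBB : ∀ s t : ℕ+, (inner ℂ (y (s+t)) (θ (s+t) (x (s+t))) : ℂ)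
      = inner ℂ (y s) (θ s (x s)) * inner ℂ (y t) (θ t (x t)) := by
    intro s t
    have h := congrArg (fun z => innerFunc (y s ⊗ₜ[ℂ] y t) z) (keyx s t)
    simpa [inner_add_right, inner_smul_right, hxx, hyy, hinn0, hinn0', hnx, hny] using h
  have hAB : ∀ s t : ℕ+,
      (0 : ℂ) = inner ℂ (x s) (θ s (x s)) * inner ℂ (y t) (θ t (x t)) := by
    intro s t
    have h := congrArg (fun z => innerFunc (x s ⊗ₜ[ℂ] y t) z) (keyx s t)
    simpa [inner_add_right, inner_smul_right, hxx, hyy, hinn0, hinn0'] using h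
  have hBA : ∀ s t : ℕ+,
      (0 : ℂ) = inner ℂ (y s) (θ s (x s)) * inner ℂ (x t) (θ t (x t)) := by
    intro s t
    have h := congrArg (fun z => innerFunc (y s ⊗ₜ[ℂ] x t) z) (keyx s t)
    simpa [inner_add_right, inner_smul_right, hxx, hyy, hinn0, hinn0'] using h
  have hCC : ∀ s t : ℕ+, (inner ℂ (x (s+t)) (θ (s+t) (y (s+t))) : ℂ)
      = inner ℂ (x s) (θ s (y s)) * inner ℂ (x t) (θ t (y t)) := by
    intro s t
    have h := congrArg (fun z => innerFunc (x s ⊗ₜ[ℂ] x t) z) (keyy s t)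
    simpa [inner_add_right, inner_smul_right, hxx, hyy, hinn0, hinn0', hnx, hny] using h
  have hDD : ∀ s t : ℕ+, (inner ℂ (y (s+t)) (θ (s+t) (y (s+t))) : ℂ)
      = inner ℂ (y s) (θ s (y s)) * inner ℂ (y t) (θ t (y t)) := by
    intro s t
    have h := congrArg (fun z => innerFunc (y s ⊗ₜ[ℂ] y t) z) (keyy s t)
    simpa [inner_add_right, inner_smul_right, hxx, hyy, hinn0, hinn0', hnx, hny] using h
  -- case analysis on whether θ₁ fixes or swaps the lines
  by_cases hA1 : (inner ℂ (x 1) (θ 1 (x 1)) : ℂ) = 0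
  · -- swap case
    -- first x 1 : θ 1 x 1 = B 1 • y 1
    have hθx1 : θ 1 (x 1) = (inner ℂ (y 1) (θ 1 (x 1)) : ℂ) • y 1 := by
      conv_lhs => rw [hθx 1]
      rw [hA1, zero_smul, zero_add]
    have hB1 : norm (inner ℂ (y 1) (θ 1 (x 1)) : ℂ) = 1 := by
      have h1 : ‖θ 1 (x 1)‖ = 1 := by rw [(θ 1).norm_map, hnx]
      rw [hθx1, norm_smul, hny, mul_one] at h1
      exact h1
    have hB1ne : (inner ℂ (y 1) (θ 1 (x 1)) : ℂ) ≠ 0 := by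
      intro h; rw [h] at hB1; simp at hB1
    have hA0 : ∀ t : ℕ+, (inner ℂ (x t) (θ t (x t)) : ℂ) = 0 := by
      intro t
      have := (hBA 1 t).symm
      exact (mul_eq_zero.mp this).resolve_left hB1ne
    have hθxB : ∀ t : ℕ+, θ t (x t) = (inner ℂ (y t) (θ t (x t)) : ℂ) • y t := by
      intro t
      conv_lhs => rw [hθx t]
      rw [hA0, zero_smul, zero_add]
    have hBabs : ∀ t : ℕ+, norm (inner ℂ (y t) (θ t (x t)) : ℂ) = 1 := by
      intro t
      have h1 : ‖θ t (x t)‖ = 1 := by rw [(θ t).norm_map, hnx]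
      rw [hθxB t, norm_smul, hny, mul_one] at h1
      exact h1
    have hBne : ∀ t : ℕ+, (inner ℂ (y t) (θ t (x t)) : ℂ) ≠ 0 := by
      intro t h; have := hBabs t; rw [h] at this; simp at this
    -- orthogonality forces D t = 0
    have hD0 : ∀ t : ℕ+, (inner ℂ (y t) (θ t (y t)) : ℂ) = 0 := by
      intro t
      have horth : (inner ℂ (θ t (x t)) (θ t (y t)) : ℂ) = 0 := by
        rw [(θ t).inner_map_map, hinn0 t]
      rw [hθxB t, inner_smul_left] at horth
      have hconj : (starRingEnd ℂ) (inner ℂ (y t) (θ t (x t)) : ℂ) ≠ 0 :=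
        fun h => hBne t (by simpa using congrArg (starRingEnd ℂ) h)
      have := (mul_eq_zero.mp horth).resolve_left hconj
      rw [hθy t, inner_add_right, inner_smul_right, inner_smul_right, hinn0' t,
        hyy t, mul_zero, mul_one, zero_add] at this
      exact this
    have hθyC : ∀ t : ℕ+, θ t (y t) = (inner ℂ (x t) (θ t (y t)) : ℂ) • x t := by
      intro t
      conv_lhs => rw [hθy t]
      rw [hD0, zero_smul, add_zero]
    have hCabs1 : norm (inner ℂ (x 1) (θ 1 (y 1)) : ℂ) = 1 := by
      have h1 : ‖θ 1 (y 1)‖ = 1 := by rw [(θ 1).norm_map, hny]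
      rw [hθyC 1, norm_smul, hnx, mul_one] at h1
      exact h1
    obtain ⟨c, hc⟩ := mult_exp (fun t => (inner ℂ (y t) (θ t (x t)) : ℂ))
      (fun s t => hBB s t) hB1
    obtain ⟨d, hd⟩ := mult_exp (fun t => (inner ℂ (x t) (θ t (y t)) : ℂ))
      (fun s t => hCC s t) hCabs1
    refine Or.inr ⟨c, d, fun t => ⟨?_, ?_⟩⟩
    · rw [hθxB t, hc t]
    · rw [hθyC t, hd t]
  · -- diagonal case
    have hB0 : ∀ t : ℕ+, (inner ℂ (y t) (θ t (x t)) : ℂ) = 0 := by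
      intro t
      exact (mul_eq_zero.mp (hAB 1 t).symm).resolve_left hA1
    have hθxA : ∀ t : ℕ+, θ t (x t) = (inner ℂ (x t) (θ t (x t)) : ℂ) • x t := by
      intro t
      conv_lhs => rw [hθx t]
      rw [hB0, zero_smul, add_zero]
    have hAabs : ∀ t : ℕ+, norm (inner ℂ (x t) (θ t (x t)) : ℂ) = 1 := by
      intro t
      have h1 : ‖θ t (x t)‖ = 1 := by rw [(θ t).norm_map, hnx]
      rw [hθxA t, norm_smul, hnx, mul_one] at h1
      exact h1
    have hAne : ∀ t : ℕ+, (inner ℂ (x t) (θ t (x t)) : ℂ) ≠ 0 := by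
      intro t h; have := hAabs t; rw [h] at this; simp at this
    have hC0 : ∀ t : ℕ+, (inner ℂ (x t) (θ t (y t)) : ℂ) = 0 := by
      intro t
      have horth : (inner ℂ (θ t (x t)) (θ t (y t)) : ℂ) = 0 := by
        rw [(θ t).inner_map_map, hinn0 t]
      rw [hθxA t, inner_smul_left] at horth
      have hconj : (starRingEnd ℂ) (inner ℂ (x t) (θ t (x t)) : ℂ) ≠ 0 :=
        fun h => hAne t (by simpa using congrArg (starRingEnd ℂ) h)
      have := (mul_eq_zero.mp horth).resolve_left hconj
      rw [hθy t, inner_add_right, inner_smul_right, inner_smul_right, hinn0 t,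
        hxx t, mul_zero, mul_one, add_zero] at this
      exact this
    have hθyD : ∀ t : ℕ+, θ t (y t) = (inner ℂ (y t) (θ t (y t)) : ℂ) • y t := by
      intro t
      conv_lhs => rw [hθy t]
      rw [hC0, zero_smul, zero_add]
    have hDabs1 : norm (inner ℂ (y 1) (θ 1 (y 1)) : ℂ) = 1 := by
      have h1 : ‖θ 1 (y 1)‖ = 1 := by rw [(θ 1).norm_map, hny]
      rw [hθyD 1, norm_smul, hny, mul_one] at h1
      exact h1
    obtain ⟨c, hc⟩ := mult_exp (fun t => (inner ℂ (x t) (θ t (x t)) : ℂ))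
      (fun s t => hAA s t) (hAabs 1)
    obtain ⟨d, hd⟩ := mult_exp (fun t => (inner ℂ (y t) (θ t (y t)) : ℂ))
      (fun s t => hDD s t) hDabs1
    refine Or.inl ⟨c, d, fun t => ⟨?_, ?_⟩⟩
    · rw [hθxA t, hc t]
    · rw [hθyD t, hd t]


end SubprodHilbert
end
end

section
/- Let (E_t, β_{s,t}) be a subproduct system of two-dimensional Hilbert spaces with a basis (x_t,y_t)_t of type E_2(a), a ∈ [0,1), and let m ∈ {1,2,...}. Then the family (x_{mt}, y_{mt})_{t∈{1,2,...}} is a basis of the restricted subproduct system (E_{mt}, β_{ms,mt})_{s,t}, of type E_1(a^m) if m is even, and of type E_2(a^m) if m is odd. -/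
noncomputable section

open scoped TensorProduct ComplexConjugate

namespace SubprodHilbert

section TensorConstruction


variable {E F : Type*} [NormedAddCommGroup E] [InnerProductSpace ℂ E]
  [NormedAddCommGroup F] [InnerProductSpace ℂ F]

local notation "⟪" x ", " y "⟫" => @inner ℂ _ _ x y

end TensorConstruction


/-- **(2.1), case `𝓔₂(a)`.** Restricting a basis of type `𝓔₂(a)` to the multiples of `m`
yields a basis of type `𝓔₁(aᵐ)` (`m` even) resp. `𝓔₂(aᵐ)` (`m` odd) of the restricted
subproduct system. -/
theorem statement9
    (E : ℕ+ → Type*) [∀ t, NormedAddCommGroup (E t)] [∀ t, InnerProductSpace ℂ (E t)]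
    (hdim : ∀ t, Module.finrank ℂ (E t) = 2)
    (β : ∀ s t : ℕ+, E (s + t) →ₗᵢ[ℂ] (E s ⊗[ℂ] E t))
    (hassoc : SubprodAssoc E β)
    (a : ℝ) (ha0 : 0 ≤ a) (ha1 : a < 1)
    (x y : ∀ t : ℕ+, E t) (hxy : IsBasisE2 E β a x y) (m : ℕ+) :
    (Even (m : ℕ) →
      IsBasisE1 (fun t => E (m * t)) (restrictβ E β m) (a ^ (m : ℕ))
        (fun t => x (m * t)) (fun t => y (m * t))) ∧
    (¬ Even (m : ℕ) →
      IsBasisE2 (fun t => E (m * t)) (restrictβ E β m) (a ^ (m : ℕ))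
        (fun t => x (m * t)) (fun t => y (m * t))) := by
  obtain ⟨hx, hy, hin, hxe, hxo, hye, hyo⟩ := hxy
  have hcast : ∀ {a b : ℕ+} (h : a = b) (z : ∀ t : ℕ+, E t), castE E h (z a) = z b := by
    intro a b h z; subst h; rfl
  have hrβ : ∀ (z : ∀ t : ℕ+, E t) (s t : ℕ+),
      restrictβ E β m s t (z (m * (s + t))) = β (m * s) (m * t) (z (m * s + m * t)) := by
    intro z s t
    show β (m * s) (m * t) (castE E _ (z (m * (s + t)))) = _
    rw [hcast]
  have hnorm : ∀ s t : ℕ+, ((m * s : ℕ+) : ℕ) = (m : ℕ) * (s : ℕ) := fun s t => by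
    push_cast; ring
  have hinner : ∀ t : ℕ+,
      (inner ℂ (x (m * t)) (y (m * t)) : ℂ) = ((a ^ (m : ℕ) : ℝ) : ℂ) ^ (t : ℕ) := by
    intro t
    rw [hin (m * t)]
    push_cast
    rw [← pow_mul]
  constructor
  · intro hm
    refine ⟨fun t => hx _, fun t => hy _, hinner, ?_, ?_⟩
    · intro s t
      rw [hrβ x s t, hxe]
      rw [hnorm s t]
      exact hm.mul_right _
    · intro s t
      rw [hrβ y s t, hye]
      rw [hnorm s t]
      exact hm.mul_right _
  · intro hm
    rw [Nat.not_even_iff_odd] at hm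
    have hpar : ∀ s : ℕ+, Even ((m * s : ℕ+) : ℕ) ↔ Even (s : ℕ) := by
      intro s
      rw [hnorm s s, Nat.even_mul]
      simp [Nat.not_even_iff_odd.mpr hm]
    refine ⟨fun t => hx _, fun t => hy _, hinner, ?_, ?_, ?_, ?_⟩
    · intro s t hs
      rw [hrβ x s t, hxe]
      exact (hpar s).mpr hs
    · intro s t hs
      rw [hrβ x s t, hxo]
      exact fun h => hs ((hpar s).mp h)
    · intro s t hs
      rw [hrβ y s t, hye]
      exact (hpar s).mpr hs
    · intro s t hs
      rw [hrβ y s t, hyo]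
      exact fun h => hs ((hpar s).mp h)


end SubprodHilbert
end
end
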